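/- arXiv:2201.11437 — 2 statements merged into one kernel-verified Lean document; each statement's English description precedes it below -/
import Mathlib

section
/- Let 1 ≤ p < ∞, 0 < q, r < ∞, let u, v, w be weights on (a,b), and let {x_k}_{k=N}^∞ ⊂ [a,b] with N ∈ ℤ be a discretizing sequence of W*(t) = ∫_t^b w. Then there exists a positive constant 𝒞'' such that (Σ_{k=N+1}^∞ 2^{-k} (∫_a^{x_k} f)^r (∫_{x_k}^{x_{k+1}} u)^{r/q})^{1/r} ≤ 𝒞'' (Σ_{k=N+1}^∞ ∫_{x_{k-1}}^{x_k} f^p v)^{1/p} holds for all f ∈ 𝔐⁺(a,b) if and only if there exists a positive constant C'' such that (Σ_{k=N+1}^∞ 2^{-k} (∫_{x_k}^{x_{k+1}} u)^{r/q} (Σ_{j=N+1}^k a_j V_p(x_{j-1}, x_j))^r)^{1/r} ≤ C'' (Σ_{k=N+1}^∞ a_k^p)^{1/p} holds for every sequence of non-negative numbers {a_k}_{k=N+1}^∞. Moreover, the best constants satisfy 𝒞'' ≈ C''. -/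
open MeasureTheory Set ENNReal NNReal

noncomputable section

/-- The open interval `(a, b)` with extended-real endpoints, viewed as a set of reals. -/
def io (a b : EReal) : Set ℝ := {x : ℝ | a < (x : EReal) ∧ (x : EReal) < b}

/-- A weight on `(a, b)`: a measurable function which is positive and finite on `(a, b)`. -/
def IsWeight (a b : EReal) (u : ℝ → ℝ≥0∞) : Prop :=
  Measurable u ∧ ∀ x ∈ io a b, 0 < u x ∧ u x < ⊤

/-- `W*(t) = ∫_t^b w`. -/
def Wstar (b : EReal) (w : ℝ → ℝ≥0∞) (t : ℝ) : ℝ≥0∞ := ∫⁻ s in io t b, w s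

/-- `{x_k}_{k=N}^∞ ⊂ [a, b]` is a discretizing sequence of `W*` with constants
`d₁, d₂`: it is strictly increasing, starts at `a`, and `W*(x_k) ≈ 2 ^ (-k)`. -/
def IsDiscretizing (a b : EReal) (w : ℝ → ℝ≥0∞) (N : ℤ) (x : ℤ → ℝ)
    (d₁ d₂ : ℝ≥0∞) : Prop :=
  (x N : EReal) = a ∧
  (∀ k : ℤ, N ≤ k → x k < x (k + 1)) ∧
  (∀ k : ℤ, N ≤ k → a ≤ (x k : EReal) ∧ (x k : EReal) ≤ b) ∧
  ∀ k : ℤ, N ≤ k →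
    d₁ * (2 : ℝ≥0∞) ^ (-(k : ℝ)) ≤ Wstar b w (x k) ∧
    Wstar b w (x k) ≤ d₂ * (2 : ℝ≥0∞) ^ (-(k : ℝ))

/-- `V_p(x, y)` from the paper. -/
def Vp (p : ℝ) (v : ℝ → ℝ≥0∞) (x y : EReal) : ℝ≥0∞ :=
  if p = 1 then essSup (fun s => (v s)⁻¹) (volume.restrict (io x y))
  else (∫⁻ s in io x y, v s ^ (-(1 / (p - 1)))) ^ ((p - 1) / p)

/-- The left-hand side of the second discretized inequality `(3.4)`. -/
def lhsD2 (a : EReal) (N : ℤ) (x : ℤ → ℝ) (q r : ℝ) (u f : ℝ → ℝ≥0∞) : ℝ≥0∞ :=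
  (∑' j : ℕ, (2 : ℝ≥0∞) ^ (-((N + 1 + j : ℤ) : ℝ)) *
    (∫⁻ s in io a (x (N + 1 + j)), f s) ^ r *
    (∫⁻ t in Ioo (x (N + 1 + j)) (x (N + 2 + j)), u t) ^ (r / q)) ^ (1 / r)

/-- The right-hand side (without the constant) of the discretized inequalities. -/
def rhsD (N : ℤ) (x : ℤ → ℝ) (p : ℝ) (v f : ℝ → ℝ≥0∞) : ℝ≥0∞ :=
  (∑' j : ℕ, ∫⁻ t in Ioo (x (N + j)) (x (N + 1 + j)), f t ^ p * v t) ^ (1 / p)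

/-- The left-hand side of the discrete inequality `(3.6)`. -/
def lhsSeq (N : ℤ) (x : ℤ → ℝ) (p q r : ℝ) (u v : ℝ → ℝ≥0∞) (aseq : ℕ → ℝ≥0) : ℝ≥0∞ :=
  (∑' k : ℕ, (2 : ℝ≥0∞) ^ (-((N + 1 + k : ℤ) : ℝ)) *
    (∫⁻ t in Ioo (x (N + 1 + k)) (x (N + 2 + k)), u t) ^ (r / q) *
    (∑ j ∈ Finset.range (k + 1),
      (aseq j : ℝ≥0∞) * Vp p v (x (N + j)) (x (N + 1 + j))) ^ r) ^ (1 / r)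

lemma io_coe_coe (α β : ℝ) : io (α : EReal) (β : EReal) = Ioo α β := by
  ext s; simp [io, Set.mem_Ioo, EReal.coe_lt_coe_iff]

lemma lintegral_Ioo_split {f : ℝ → ℝ≥0∞} {l m rr : ℝ} (h1 : l < m) (h2 : m < rr) :
    ∫⁻ s in Ioo l rr, f s = (∫⁻ s in Ioo l m, f s) + ∫⁻ s in Ioo m rr, f s := by
  rw [← Set.Ioo_union_Ico_eq_Ioo h1 h2.le]
  rw [lintegral_union measurableSet_Ico (by
    rw [Set.disjoint_left]; intro s hs hs'; exact absurd hs'.1 (not_le.2 hs.2))]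
  congr 1
  exact setLIntegral_congr (MeasureTheory.Ioo_ae_eq_Ico).symm

section SeqCtx

variable {N : ℤ} {x : ℤ → ℝ}

lemma x_strictMono (hxlt : ∀ k : ℤ, N ≤ k → x k < x (k + 1)) {i j : ℤ}
    (hNi : N ≤ i) (hij : i < j) : x i < x j := by
  have h : ∀ j : ℤ, i + 1 ≤ j → x i < x j := by
    exact fun j hj => Int.le_induction (motive := fun j _ => x i < x j) (hxlt i hNi)
      (fun n hn ih => ih.trans (hxlt n (by omega))) j hj
  exact h j (by omega)

lemma x_mono (hxlt : ∀ k : ℤ, N ≤ k → x k < x (k + 1)) {i j : ℤ}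
    (hNi : N ≤ i) (hij : i ≤ j) : x i ≤ x j := by
  rcases eq_or_lt_of_le hij with h | h
  · rw [h]
  · exact (x_strictMono hxlt hNi h).le

lemma decomp' (hxlt : ∀ k : ℤ, N ≤ k → x k < x (k + 1)) (k : ℕ) (f : ℝ → ℝ≥0∞) :
    ∫⁻ s in Ioo (x N) (x (N + 1 + (k : ℤ))), f s
      = ∑ j ∈ Finset.range (k + 1), ∫⁻ s in Ioo (x (N + (j : ℤ))) (x (N + 1 + (j : ℤ))), f s := by
  induction k with
  | zero =>
      simp only [Nat.cast_zero, add_zero, zero_add, Finset.range_one, Finset.sum_singleton]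
  | succ k ih =>
      have h1 : x N < x (N + 1 + (k : ℤ)) := x_strictMono hxlt le_rfl (by omega)
      have e1 : (N + 1 + ((k + 1 : ℕ) : ℤ)) = (N + 1 + (k : ℤ)) + 1 := by push_cast; ring
      have e2 : (N + ((k + 1 : ℕ) : ℤ)) = N + 1 + (k : ℤ) := by push_cast; ring
      rw [Finset.sum_range_succ, ← ih, e2, e1]
      exact lintegral_Ioo_split h1 (hxlt (N + 1 + (k : ℤ)) (by omega))

end SeqCtx

lemma setLintegral_pos {S : Set ℝ} (hμ : 0 < volume S)
    {g : ℝ → ℝ≥0∞} (hg : Measurable g) (hpos : ∀ s ∈ S, 0 < g s) :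
    0 < ∫⁻ s in S, g s := by
  rw [lintegral_pos_iff_support hg]
  rw [Measure.restrict_apply (measurableSet_support hg)]
  refine lt_of_lt_of_le hμ (measure_mono ?_)
  intro s hs
  exact ⟨(hpos s hs).ne', hs⟩

section Interval
variable {p : ℝ} {v : ℝ → ℝ≥0∞} {α β : ℝ}

lemma holder_interval (hp : 1 ≤ p) (hv : Measurable v) (hαβ : α < β)
    (hvI : ∀ s ∈ Set.Ioo α β, 0 < v s ∧ v s < ⊤) {f : ℝ → ℝ≥0∞} (hf : Measurable f) :
    ∫⁻ s in Ioo α β, f s ≤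
      (∫⁻ s in Ioo α β, f s ^ p * v s) ^ (1 / p) * Vp p v (α : EReal) (β : EReal) := by
  rcases eq_or_lt_of_le hp with hp1 | hp1
  · -- p = 1
    subst hp1
    rw [Vp, if_pos rfl, io_coe_coe]
    set E := essSup (fun s => (v s)⁻¹) (volume.restrict (Ioo α β)) with hE
    have hfv : ∫⁻ s in Ioo α β, f s ^ (1:ℝ) * v s = ∫⁻ s in Ioo α β, f s * v s := by
      refine setLIntegral_congr_fun measurableSet_Ioo (fun s _ => ?_)
      rw [ENNReal.rpow_one]
    rw [hfv]
    have h1 : ∫⁻ s in Ioo α β, f s = ∫⁻ s in Ioo α β, (f s * v s) * (v s)⁻¹ :=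
      setLIntegral_congr_fun measurableSet_Ioo (fun s hs => by
        rw [mul_assoc, ENNReal.mul_inv_cancel (hvI s hs).1.ne' (hvI s hs).2.ne, mul_one])
    by_cases hEtop : E = ⊤
    · by_cases h0 : ∫⁻ s in Ioo α β, f s * v s = 0
      · have hz : ∀ᵐ s ∂(volume.restrict (Ioo α β)), f s * v s = 0 :=
          (lintegral_eq_zero_iff (hf.mul hv)).1 h0
        have : ∫⁻ s in Ioo α β, f s = 0 := by
          rw [lintegral_eq_zero_iff hf]
          have goal : ∀ᵐ s ∂(volume.restrict (Ioo α β)), f s = 0 := by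
            rw [ae_restrict_iff' measurableSet_Ioo] at hz ⊢
            refine hz.mono fun s hs hmem => ?_
            rcases mul_eq_zero.1 (hs hmem) with h | h
            · exact h
            · exact absurd h (hvI s hmem).1.ne'
          exact goal
        simp [this]
      · rw [hEtop]
        rw [ENNReal.mul_top]
        · exact le_top
        · simp [ENNReal.rpow_eq_zero_iff, h0]
    · calc ∫⁻ s in Ioo α β, f s = ∫⁻ s in Ioo α β, (f s * v s) * (v s)⁻¹ := h1
        _ ≤ ∫⁻ s in Ioo α β, (f s * v s) * E := by
            refine lintegral_mono_ae ((ENNReal.ae_le_essSup (fun s => (v s)⁻¹)).mono fun s hs => ?_)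
            exact mul_le_mul_right hs _
        _ = (∫⁻ s in Ioo α β, f s * v s) * E := lintegral_mul_const' E _ hEtop
        _ = (∫⁻ s in Ioo α β, f s * v s) ^ ((1:ℝ) / 1) * E := by
            norm_num
  · -- p > 1
    have hp0 : p ≠ 0 := by linarith
    have hpm0 : p - 1 ≠ 0 := by intro h; rw [sub_eq_zero] at h; exact hp1.ne' h
    have hpq : p.HolderConjugate (p / (p - 1)) := Real.HolderConjugate.conjExponent hp1
    have hFm : Measurable (fun s => f s * v s ^ (1 / p)) := hf.mul (hv.pow_const _)
    have hGm : Measurable (fun s => v s ^ (-(1 / p))) := hv.pow_const _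
    have key := ENNReal.lintegral_mul_le_Lp_mul_Lq (volume.restrict (Ioo α β)) hpq
      hFm.aemeasurable hGm.aemeasurable
    have e1 : ∫⁻ s in Ioo α β,
        ((fun s => f s * v s ^ (1 / p)) * fun s => v s ^ (-(1 / p))) s
        = ∫⁻ s in Ioo α β, f s := by
      refine setLIntegral_congr_fun measurableSet_Ioo (fun s hs => ?_)
      simp only [Pi.mul_apply]
      rw [mul_assoc, ← ENNReal.rpow_add _ _ (hvI s hs).1.ne' (hvI s hs).2.ne]
      rw [add_neg_cancel, ENNReal.rpow_zero, mul_one]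
    have e2 : ∫⁻ s in Ioo α β, (f s * v s ^ (1 / p)) ^ p
        = ∫⁻ s in Ioo α β, f s ^ p * v s := by
      refine setLIntegral_congr_fun measurableSet_Ioo (fun s _ => ?_)
      rw [ENNReal.mul_rpow_of_nonneg _ _ (by positivity : (0:ℝ) ≤ p)]
      rw [← ENNReal.rpow_mul, one_div_mul_cancel hp0, ENNReal.rpow_one]
    have e3 : ∫⁻ s in Ioo α β, (v s ^ (-(1 / p))) ^ (p / (p - 1))
        = ∫⁻ s in Ioo α β, v s ^ (-(1 / (p - 1))) := by
      refine setLIntegral_congr_fun measurableSet_Ioo (fun s _ => ?_)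
      rw [← ENNReal.rpow_mul]
      congr 1
      field_simp
    have e4 : 1 / (p / (p - 1)) = (p - 1) / p := by
      field_simp
    rw [e1, e2, e3, e4] at key
    rw [Vp, if_neg hp1.ne', io_coe_coe]
    exact key

lemma Vp_pos (hp : 1 ≤ p) (hv : Measurable v) (hαβ : α < β)
    (hvI : ∀ s ∈ Set.Ioo α β, 0 < v s ∧ v s < ⊤) :
    0 < Vp p v (α : EReal) (β : EReal) := by
  have hμ : 0 < volume (Ioo α β) := by
    rw [Real.volume_Ioo]; exact ENNReal.ofReal_pos.2 (by linarith [hαβ])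
  rcases eq_or_lt_of_le hp with hp1 | hp1
  · subst hp1
    rw [Vp, if_pos rfl, io_coe_coe]
    rw [pos_iff_ne_zero]
    intro hE0
    have h := ENNReal.ae_le_essSup (μ := volume.restrict (Ioo α β)) (f := fun s => (v s)⁻¹)
    rw [hE0] at h
    rw [ae_restrict_iff' measurableSet_Ioo] at h
    have h2 : ∀ᵐ s, s ∉ Ioo α β := by
      refine h.mono fun s hs hmem => ?_
      have hpos : 0 < (v s)⁻¹ := ENNReal.inv_pos.2 (hvI s hmem).2.ne
      exact absurd (hs hmem) (not_le.2 hpos)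
    rw [MeasureTheory.ae_iff] at h2
    have h3 : {s : ℝ | ¬ s ∉ Ioo α β} = Ioo α β := by ext s; simp
    rw [h3] at h2
    exact absurd h2 hμ.ne'
  · have hφpos : 0 < ∫⁻ s in Ioo α β, v s ^ (-(1 / (p - 1))) := by
      refine setLintegral_pos hμ (hv.pow_const _) fun s hs => ?_
      exact ENNReal.rpow_pos (hvI s hs).1 (hvI s hs).2.ne
    rw [Vp, if_neg hp1.ne', io_coe_coe]
    by_cases htop : (∫⁻ s in Ioo α β, v s ^ (-(1 / (p - 1)))) = ⊤
    · rw [htop, ENNReal.top_rpow_of_pos (div_pos (by linarith) (by linarith))]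
      exact pos_iff_ne_zero.2 ENNReal.top_ne_zero
    · exact ENNReal.rpow_pos hφpos htop

lemma meas_pos_of_lt_essSup {g : ℝ → ℝ≥0∞} {S : Set ℝ} (hS : MeasurableSet S) {t : ℝ≥0∞}
    (ht : t < essSup g (volume.restrict S)) (hg : Measurable g) :
    0 < volume.restrict S {s | t < g s} := by
  rw [pos_iff_ne_zero]
  intro h0
  refine absurd (essSup_le_of_ae_le (μ := volume.restrict S) t ?_) ht.not_ge
  have goal : ∀ᵐ s ∂(volume.restrict S), g s ≤ t := by
    rw [MeasureTheory.ae_iff]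
    simpa [not_le] using h0
  exact goal

end Interval


section MainCtx

variable {p q r : ℝ} {a b : EReal} {u v : ℝ → ℝ≥0∞} {N : ℤ} {x : ℤ → ℝ}

lemma Ioo_subset_io
    (hxab : ∀ k : ℤ, N ≤ k → a ≤ (x k : EReal) ∧ (x k : EReal) ≤ b)
    {i j : ℤ} (hNi : N ≤ i) (hNj : N ≤ j) : Ioo (x i) (x j) ⊆ io a b := by
  intro s hs
  exact ⟨lt_of_le_of_lt (hxab i hNi).1 (EReal.coe_lt_coe_iff.2 hs.1),
         lt_of_lt_of_le (EReal.coe_lt_coe_iff.2 hs.2) (hxab j hNj).2⟩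

lemma x_succ_lt (hxlt : ∀ k : ℤ, N ≤ k → x k < x (k + 1)) (j : ℕ) :
    x (N + (j : ℤ)) < x (N + 1 + (j : ℤ)) := by
  have := hxlt (N + (j : ℤ)) (by omega)
  rwa [show N + (j : ℤ) + 1 = N + 1 + (j : ℤ) by ring] at this

lemma x_succ_lt' (hxlt : ∀ k : ℤ, N ≤ k → x k < x (k + 1)) (k : ℕ) :
    x (N + 1 + (k : ℤ)) < x (N + 2 + (k : ℤ)) := by
  have := hxlt (N + 1 + (k : ℤ)) (by omega)
  rwa [show N + 1 + (k : ℤ) + 1 = N + 2 + (k : ℤ) by ring] at this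

lemma U_pos (hu : IsWeight a b u)
    (hxlt : ∀ k : ℤ, N ≤ k → x k < x (k + 1))
    (hxab : ∀ k : ℤ, N ≤ k → a ≤ (x k : EReal) ∧ (x k : EReal) ≤ b) (k : ℕ) :
    0 < ∫⁻ t in Ioo (x (N + 1 + (k : ℤ))) (x (N + 2 + (k : ℤ))), u t := by
  refine setLintegral_pos ?_ hu.1 ?_
  · rw [Real.volume_Ioo]; exact ENNReal.ofReal_pos.2 (by linarith [x_succ_lt' hxlt k])
  · exact fun s hs => (hu.2 s (Ioo_subset_io hxab (by omega) (by omega) hs)).1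

lemma V_pos (hp : 1 ≤ p) (hv : IsWeight a b v)
    (hxlt : ∀ k : ℤ, N ≤ k → x k < x (k + 1))
    (hxab : ∀ k : ℤ, N ≤ k → a ≤ (x k : EReal) ∧ (x k : EReal) ≤ b) (j : ℕ) :
    0 < Vp p v (x (N + (j : ℤ))) (x (N + 1 + (j : ℤ))) :=
  Vp_pos hp hv.1 (x_succ_lt hxlt j)
    (fun s hs => hv.2 s (Ioo_subset_io hxab (by omega) (by omega) hs))

lemma C_pos (hp : 1 ≤ p) (hq : 0 < q) (hr : 0 < r)
    (hu : IsWeight a b u) (hv : IsWeight a b v)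
    (hxlt : ∀ k : ℤ, N ≤ k → x k < x (k + 1))
    (hxab : ∀ k : ℤ, N ≤ k → a ≤ (x k : EReal) ∧ (x k : EReal) ≤ b)
    {C : ℝ≥0∞}
    (hC : ∀ aseq : ℕ → ℝ≥0,
      lhsSeq N x p q r u v aseq ≤ C * (∑' k : ℕ, ((aseq k : ℝ≥0∞)) ^ p) ^ (1 / p)) :
    0 < C := by
  classical
  have hp0 : (0:ℝ) < p := by linarith
  have hδ := hC (fun j => if j = 0 then 1 else 0)
  have hX : (∑' k : ℕ, ((((if k = 0 then (1:ℝ≥0) else 0) : ℝ≥0) : ℝ≥0∞)) ^ p) ^ (1 / p)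
      = 1 := by
    have h : ∀ k : ℕ, ((((if k = 0 then (1:ℝ≥0) else 0) : ℝ≥0) : ℝ≥0∞)) ^ p
        = if k = 0 then (1:ℝ≥0∞) else 0 := by
      intro k
      by_cases h : k = 0
      · simp [h]
      · simp [h, ENNReal.zero_rpow_of_pos hp0]
    rw [tsum_congr h, tsum_ite_eq, ENNReal.one_rpow]
  rw [hX, mul_one] at hδ
  refine lt_of_lt_of_le ?_ hδ
  rw [lhsSeq, pos_iff_ne_zero, Ne, ENNReal.rpow_eq_zero_iff]
  have hterm : (2 : ℝ≥0∞) ^ (-((N + 1 + (0:ℕ) : ℤ) : ℝ)) *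
      (∫⁻ t in Ioo (x (N + 1 + ((0:ℕ) : ℤ))) (x (N + 2 + ((0:ℕ) : ℤ))), u t) ^ (r / q) *
      (∑ j ∈ Finset.range (0 + 1),
        ((((if j = 0 then (1:ℝ≥0) else 0) : ℝ≥0) : ℝ≥0∞)) *
          Vp p v (x (N + (j : ℤ))) (x (N + 1 + (j : ℤ)))) ^ r ≠ 0 := by
    have h2 : (2 : ℝ≥0∞) ^ (-((N + 1 + (0:ℕ) : ℤ) : ℝ)) ≠ 0 :=
      (ENNReal.rpow_pos (by norm_num) (by norm_num)).ne'
    have hUq : (∫⁻ t in Ioo (x (N + 1 + ((0:ℕ) : ℤ))) (x (N + 2 + ((0:ℕ) : ℤ))), u t) ^ (r / q)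
        ≠ 0 := by
      rw [Ne, ENNReal.rpow_eq_zero_iff]
      rintro (⟨h0, _⟩ | ⟨_, hneg⟩)
      · exact (U_pos hu hxlt hxab 0).ne' h0
      · have := div_pos hr hq; linarith
    have hsum : (∑ j ∈ Finset.range (0 + 1),
        ((((if j = 0 then (1:ℝ≥0) else 0) : ℝ≥0) : ℝ≥0∞)) *
          Vp p v (x (N + (j : ℤ))) (x (N + 1 + (j : ℤ)))) ^ r ≠ 0 := by
      rw [Finset.range_one, Finset.sum_singleton, if_pos rfl, ENNReal.coe_one, one_mul]
      rw [Ne, ENNReal.rpow_eq_zero_iff]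
      rintro (⟨h0, _⟩ | ⟨_, hneg⟩)
      · exact (V_pos hp hv hxlt hxab 0).ne' h0
      · linarith
    exact mul_ne_zero (mul_ne_zero h2 hUq) hsum
  rintro (⟨h0, _⟩ | ⟨htop, hneg⟩)
  · exact hterm (le_antisymm (h0 ▸ ENNReal.le_tsum 0) (zero_le))
  · have := one_div_pos.2 hr; linarith

lemma main_holder (hp : 1 ≤ p) (hq : 0 < q) (hr : 0 < r)
    (hu : IsWeight a b u) (hv : IsWeight a b v)
    (hxa : (x N : EReal) = a)
    (hxlt : ∀ k : ℤ, N ≤ k → x k < x (k + 1))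
    (hxab : ∀ k : ℤ, N ≤ k → a ≤ (x k : EReal) ∧ (x k : EReal) ≤ b)
    {C : ℝ≥0∞}
    (hC : ∀ aseq : ℕ → ℝ≥0,
      lhsSeq N x p q r u v aseq ≤ C * (∑' k : ℕ, ((aseq k : ℝ≥0∞)) ^ p) ^ (1 / p))
    {f : ℝ → ℝ≥0∞} (hf : Measurable f) :
    lhsD2 a N x q r u f ≤ C * rhsD N x p v f := by
  have hp0 : (0:ℝ) < p := by linarith
  have hCpos : 0 < C := C_pos hp hq hr hu hv hxlt hxab hC
  by_cases htop : ∃ j : ℕ,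
      ∫⁻ t in Ioo (x (N + (j:ℤ))) (x (N + 1 + (j:ℤ))), f t ^ p * v t = ⊤
  · obtain ⟨j, hj⟩ := htop
    have h1 : (∑' j : ℕ, ∫⁻ t in Ioo (x (N + (j:ℤ))) (x (N + 1 + (j:ℤ))), f t ^ p * v t) = ⊤ :=
      top_le_iff.1 (hj ▸ ENNReal.le_tsum j)
    have : rhsD N x p v f = ⊤ := by
      rw [rhsD, h1, ENNReal.top_rpow_of_pos (by positivity)]
    rw [this, ENNReal.mul_top hCpos.ne']
    exact le_top
  · push_neg at htop
    set aseq : ℕ → ℝ≥0 := fun j =>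
      ((∫⁻ t in Ioo (x (N + (j:ℤ))) (x (N + 1 + (j:ℤ))), f t ^ p * v t) ^ (1/p)).toNNReal
      with haseq
    have hcoe : ∀ j : ℕ, (aseq j : ℝ≥0∞)
        = (∫⁻ t in Ioo (x (N + (j:ℤ))) (x (N + 1 + (j:ℤ))), f t ^ p * v t) ^ (1/p) := fun j =>
      ENNReal.coe_toNNReal ((ENNReal.rpow_lt_top_of_nonneg (by positivity)
        (htop j)).ne)
    have hX : (∑' k : ℕ, ((aseq k : ℝ≥0∞)) ^ p) ^ (1/p) = rhsD N x p v f := by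
      rw [rhsD]
      congr 1
      refine tsum_congr fun j => ?_
      rw [hcoe j, ← ENNReal.rpow_mul, one_div_mul_cancel hp0.ne', ENNReal.rpow_one]
    have key : ∀ k : ℕ, (∫⁻ s in io a (x (N + 1 + (k:ℤ))), f s)
        ≤ ∑ j ∈ Finset.range (k + 1),
            (aseq j : ℝ≥0∞) * Vp p v (x (N + (j:ℤ))) (x (N + 1 + (j:ℤ))) := by
      intro k
      rw [← hxa, io_coe_coe, decomp' hxlt k f]
      refine Finset.sum_le_sum fun j _ => ?_
      rw [hcoe j]
      exact holder_interval hp hv.1 (x_succ_lt hxlt j)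
        (fun s hs => hv.2 s (Ioo_subset_io hxab (by omega) (by omega) hs)) hf
    calc lhsD2 a N x q r u f ≤ lhsSeq N x p q r u v aseq := by
          rw [lhsD2, lhsSeq]
          refine ENNReal.rpow_le_rpow (ENNReal.tsum_le_tsum fun k => ?_) (by positivity)
          rw [mul_right_comm]
          exact mul_le_mul_right (ENNReal.rpow_le_rpow (key k) hr.le) _
      _ ≤ C * (∑' k : ℕ, ((aseq k : ℝ≥0∞)) ^ p) ^ (1/p) := hC aseq
      _ = C * rhsD N x p v f := by rw [hX]

end MainCtx

lemma setLintegral_indicator' {S A : Set ℝ} (hS : MeasurableSet S) (f : ℝ → ℝ≥0∞) :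
    ∫⁻ s in A, S.indicator f s = ∫⁻ s in S ∩ A, f s := by
  rw [lintegral_indicator hS, Measure.restrict_restrict hS]

lemma ennreal_eq_top_of_forall_nat {c C : ℝ≥0∞} (hc : c ≠ 0) (h : ∀ n : ℕ, c * n ≤ C) :
    C = ⊤ := by
  have h1 : c * ⊤ ≤ C := by
    rw [← ENNReal.iSup_natCast, ENNReal.mul_iSup]
    exact iSup_le h
  rw [ENNReal.mul_top hc] at h1
  exact top_le_iff.1 h1

section MainCtx2

variable {p q r : ℝ} {a b : EReal} {u v : ℝ → ℝ≥0∞} {N : ℤ} {x : ℤ → ℝ}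

lemma lhsD2_ge (hq : 0 < q) (hr : 0 < r) (k : ℕ) (f : ℝ → ℝ≥0∞) :
    ((2:ℝ≥0∞) ^ (-((N + 1 + k : ℤ) : ℝ))) ^ (1/r) * (∫⁻ s in io a (x (N + 1 + (k:ℤ))), f s) *
      (∫⁻ t in Ioo (x (N + 1 + (k:ℤ))) (x (N + 2 + (k:ℤ))), u t) ^ (1/q)
      ≤ lhsD2 a N x q r u f := by
  rw [lhsD2]
  have h1 : (2:ℝ≥0∞) ^ (-((N + 1 + k : ℤ) : ℝ)) * (∫⁻ s in io a (x (N + 1 + (k:ℤ))), f s) ^ r *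
      (∫⁻ t in Ioo (x (N + 1 + (k:ℤ))) (x (N + 2 + (k:ℤ))), u t) ^ (r/q)
      ≤ ∑' j : ℕ, (2 : ℝ≥0∞) ^ (-((N + 1 + j : ℤ) : ℝ)) *
        (∫⁻ s in io a (x (N + 1 + j)), f s) ^ r *
        (∫⁻ t in Ioo (x (N + 1 + j)) (x (N + 2 + j)), u t) ^ (r / q) := ENNReal.le_tsum k
  have h2 := ENNReal.rpow_le_rpow h1 (one_div_pos.2 hr).le
  refine le_trans (le_of_eq ?_) h2
  rw [ENNReal.mul_rpow_of_nonneg _ _ (one_div_pos.2 hr).le,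
      ENNReal.mul_rpow_of_nonneg _ _ (one_div_pos.2 hr).le,
      ← ENNReal.rpow_mul (∫⁻ s in io a (x (N + 1 + (k:ℤ))), f s),
      ← ENNReal.rpow_mul (∫⁻ t in Ioo (x (N + 1 + (k:ℤ))) (x (N + 2 + (k:ℤ))), u t),
      mul_one_div_cancel hr.ne', ENNReal.rpow_one,
      show r / q * (1/r) = 1/q by field_simp]

lemma blowup_gt1 (hp1 : 1 < p) (hq : 0 < q) (hr : 0 < r)
    (hu : IsWeight a b u) (hv : IsWeight a b v)
    (hxa : (x N : EReal) = a)
    (hxlt : ∀ k : ℤ, N ≤ k → x k < x (k + 1))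
    (hxab : ∀ k : ℤ, N ≤ k → a ≤ (x k : EReal) ∧ (x k : EReal) ≤ b)
    {C'' : ℝ≥0∞}
    (hC'' : ∀ f : ℝ → ℝ≥0∞, Measurable f → lhsD2 a N x q r u f ≤ C'' * rhsD N x p v f)
    (hCtop : C'' ≠ ⊤) (k : ℕ) :
    (∫⁻ s in Ioo (x (N + (k:ℤ))) (x (N + 1 + (k:ℤ))), v s ^ (-(1/(p-1)))) ≠ ⊤ := by
  intro hΦtop
  have hp0 : (0:ℝ) < p := by linarith
  have hpm : (0:ℝ) < p - 1 := by linarith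
  set α : ℝ := x (N + (k:ℤ)) with hα
  set β : ℝ := x (N + 1 + (k:ℤ)) with hβ
  set φ : ℝ → ℝ≥0∞ := fun s => v s ^ (-(1/(p-1))) with hφdef
  have hvI : ∀ s ∈ Ioo α β, 0 < v s ∧ v s < ⊤ := fun s hs =>
    hv.2 s (Ioo_subset_io hxab (by omega) (by omega) hs)
  have hφm : Measurable φ := hv.1.pow_const _
  set Sn : ℕ → Set ℝ := fun n => Ioo α β ∩ {s | φ s ≤ (n:ℝ≥0∞)} with hSn
  have hSm : ∀ n, MeasurableSet (Sn n) :=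
    fun n => measurableSet_Ioo.inter (hφm measurableSet_Iic)
  have hSmem : ∀ (n : ℕ) (s : ℝ), s ∈ Sn n ↔ s ∈ Ioo α β ∧ φ s ≤ (n:ℝ≥0∞) := by
    intro n s; rw [hSn]; exact Iff.rfl
  set fn : ℕ → ℝ → ℝ≥0∞ := fun n => (Sn n).indicator φ with hfndef
  have hfnm : ∀ n, Measurable (fn n) := fun n => hφm.indicator (hSm n)
  set T : ℕ → ℝ≥0∞ := fun n => ∫⁻ s in Sn n, φ s with hTdef
  have hTtop : ∀ n, T n ≠ ⊤ := by
    intro n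
    have hb : T n ≤ (n:ℝ≥0∞) * volume (Ioo α β) := by
      calc T n ≤ ∫⁻ _ in Sn n, (n:ℝ≥0∞) :=
            setLIntegral_mono measurable_const (fun s hs => hs.2)
        _ = (n:ℝ≥0∞) * volume (Sn n) := setLIntegral_const _ _
        _ ≤ (n:ℝ≥0∞) * volume (Ioo α β) :=
            mul_le_mul_right (measure_mono inter_subset_left) _
    refine (hb.trans_lt ?_).ne
    rw [Real.volume_Ioo]
    exact ENNReal.mul_lt_top ENNReal.coe_lt_top ENNReal.ofReal_lt_top
  have hTsup : ⨆ n, T n = ⊤ := by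
    have h1 : ∀ n, T n = ∫⁻ s, fn n s := fun n => (lintegral_indicator (hSm n) φ).symm
    have hmono : Monotone fn := by
      intro m n hmn s
      by_cases hs : s ∈ Sn m
      · rw [hfndef]
        simp only
        obtain ⟨hs1, hs2⟩ := (hSmem m s).1 hs
        rw [Set.indicator_of_mem hs, Set.indicator_of_mem
          ((hSmem n s).2 ⟨hs1, le_trans hs2 (by exact_mod_cast Nat.cast_le.2 hmn)⟩)]
      · simp only [hfndef]
        rw [Set.indicator_of_notMem hs]
        exact zero_le
    have h2 : (fun s => ⨆ n, fn n s) = (Ioo α β).indicator φ := by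
      funext s
      by_cases hs : s ∈ Ioo α β
      · rw [Set.indicator_of_mem hs]
        have hφs : φ s ≠ ⊤ := by
          rw [hφdef]
          simp only
          rw [Ne, ENNReal.rpow_eq_top_iff]
          rintro (⟨h0, _⟩ | ⟨htop, _⟩)
          · exact (hvI s hs).1.ne' h0
          · exact (hvI s hs).2.ne htop
        obtain ⟨n, hn⟩ := ENNReal.exists_nat_gt hφs
        apply le_antisymm
        · refine iSup_le fun m => ?_
          simp only [hfndef]
          exact Set.indicator_le_self _ _ s
        · calc φ s = fn n s := by
                simp only [hfndef]
                rw [Set.indicator_of_mem ((hSmem n s).2 ⟨hs, hn.le⟩)]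
            _ ≤ ⨆ n, fn n s := le_iSup (fun n => fn n s) n
      · rw [Set.indicator_of_notMem hs]
        refine le_antisymm (iSup_le fun m => ?_) (zero_le)
        simp only [hfndef]
        rw [Set.indicator_of_notMem (fun h => hs ((hSmem m s).1 h).1)]
    calc ⨆ n, T n = ⨆ n, ∫⁻ s, fn n s := by simp only [h1]
      _ = ∫⁻ s, ⨆ n, fn n s := (lintegral_iSup hfnm hmono).symm
      _ = ∫⁻ s in Ioo α β, φ s := by rw [h2, lintegral_indicator measurableSet_Ioo]
      _ = ⊤ := hΦtop
  have hφpv : ∀ s ∈ Ioo α β, φ s ^ p * v s = φ s := by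
    intro s hs
    simp only [hφdef]
    rw [← ENNReal.rpow_mul]
    nth_rewrite 2 [show v s = v s ^ (1:ℝ) from (ENNReal.rpow_one _).symm]
    rw [← ENNReal.rpow_add _ _ (hvI s hs).1.ne' (hvI s hs).2.ne]
    congr 1
    field_simp
    ring
  have hIdisj : ∀ i : ℕ, i ≠ k → ∀ s ∈ Ioo (x (N + (i:ℤ))) (x (N + 1 + (i:ℤ))), s ∉ Ioo α β := by
    intro i hik s hsi hsk
    rcases lt_or_gt_of_ne hik with h | h
    · have : x (N + 1 + (i:ℤ)) ≤ x (N + (k:ℤ)) := x_mono hxlt (by omega) (by omega)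
      have h1 := hsi.2
      have h2 := hsk.1
      rw [hα] at h2
      linarith
    · have : x (N + 1 + (k:ℤ)) ≤ x (N + (i:ℤ)) := x_mono hxlt (by omega) (by omega)
      have h1 := hsi.1
      have h2 := hsk.2
      rw [hβ] at h2
      linarith
  have hrhs : ∀ n, rhsD N x p v (fn n) = (T n) ^ (1/p) := by
    intro n
    rw [rhsD]
    congr 1
    rw [tsum_eq_single k ?_]
    · have hcong : ∀ s ∈ Ioo α β, fn n s ^ p * v s = (Sn n).indicator φ s := by
        intro s hs
        by_cases hs' : s ∈ Sn n
        · simp only [hfndef]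
          rw [Set.indicator_of_mem hs']
          exact hφpv s hs
        · simp only [hfndef]
          rw [Set.indicator_of_notMem hs', ENNReal.zero_rpow_of_pos hp0, zero_mul]
      rw [setLIntegral_congr_fun measurableSet_Ioo (hcong),
        setLintegral_indicator' (hSm n),
        inter_eq_self_of_subset_left (fun s hs => ((hSmem n s).1 hs).1)]
    · intro i hik
      have hz : ∀ s ∈ Ioo (x (N + (i:ℤ))) (x (N + 1 + (i:ℤ))), fn n s ^ p * v s = 0 := by
        intro s hs
        have : s ∉ Sn n := fun h => hIdisj i hik s hs ((hSmem n s).1 h).1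
        simp only [hfndef]
        rw [Set.indicator_of_notMem this, ENNReal.zero_rpow_of_pos hp0, zero_mul]
      rw [setLIntegral_congr_fun measurableSet_Ioo (hz), lintegral_zero]
  set c0 : ℝ≥0∞ := ((2:ℝ≥0∞) ^ (-((N + 1 + k : ℤ) : ℝ))) ^ (1/r) with hc0def
  set Uq : ℝ≥0∞ := (∫⁻ t in Ioo (x (N + 1 + (k:ℤ))) (x (N + 2 + (k:ℤ))), u t) ^ (1/q) with hUqdef
  have hdata : ∀ n, c0 * T n * Uq ≤ C'' * (T n) ^ (1/p) := by
    intro n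
    have hion : T n ≤ ∫⁻ s in io a (x (N + 1 + (k:ℤ))), fn n s := by
      rw [← hxa, io_coe_coe, hfndef]
      simp only
      rw [setLintegral_indicator' (hSm n)]
      have hsub2 : Sn n ∩ Ioo (x N) (x (N + 1 + (k:ℤ))) = Sn n := by
        refine inter_eq_self_of_subset_left ?_
        intro s hs
        obtain ⟨hs1, _⟩ := (hSmem n s).1 hs
        refine ⟨lt_of_le_of_lt ?_ hs1.1, hs1.2⟩
        exact x_mono hxlt le_rfl (by omega)
      rw [hsub2]
    calc c0 * T n * Uq ≤ c0 * (∫⁻ s in io a (x (N + 1 + (k:ℤ))), fn n s) * Uq := by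
          exact mul_le_mul_left (mul_le_mul_right hion _) _
      _ ≤ lhsD2 a N x q r u (fn n) := lhsD2_ge hq hr k (fn n)
      _ ≤ C'' * rhsD N x p v (fn n) := hC'' (fn n) (hfnm n)
      _ = C'' * (T n) ^ (1/p) := by rw [hrhs n]
  have hc0 : c0 ≠ 0 := by
    rw [hc0def]
    exact (ENNReal.rpow_pos (ENNReal.rpow_pos (by norm_num) (by norm_num)) (by
      rw [Ne, ENNReal.rpow_eq_top_iff]
      rintro (⟨h0, _⟩ | ⟨htop, _⟩) <;> simp_all)).ne'
  have hUq0 : Uq ≠ 0 := by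
    rw [hUqdef, Ne, ENNReal.rpow_eq_zero_iff]
    rintro (⟨h0, _⟩ | ⟨_, hneg⟩)
    · exact (U_pos hu hxlt hxab k).ne' h0
    · have := one_div_pos.2 hq; linarith
  have hfin : ∀ m : ℕ, (c0 * Uq) * m ≤ C'' := by
    intro m
    rcases Nat.eq_zero_or_pos m with hm | hm
    · simp [hm]
    have hmtop : ((m:ℝ≥0∞)) ^ (p/(p-1)) < ⊤ :=
      ENNReal.rpow_lt_top_of_nonneg (by positivity) ENNReal.coe_ne_top
    obtain ⟨n, hn⟩ := iSup_eq_top.1 hTsup ((m:ℝ≥0∞) ^ (p/(p-1))) hmtop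
    have hTn0 : T n ≠ 0 := (lt_of_le_of_lt (zero_le) hn).ne'
    have hsplit : T n = T n ^ ((p-1)/p) * T n ^ (1/p) := by
      rw [← ENNReal.rpow_add _ _ hTn0 (hTtop n),
        show (p-1)/p + 1/p = 1 by field_simp; ring, ENNReal.rpow_one]
    have h3 : (c0 * Uq * T n ^ ((p-1)/p)) * T n ^ (1/p) ≤ C'' * T n ^ (1/p) := by
      calc (c0 * Uq * T n ^ ((p-1)/p)) * T n ^ (1/p) = c0 * (T n ^ ((p-1)/p) * T n ^ (1/p)) * Uq := by
            ring
        _ = c0 * T n * Uq := by rw [← hsplit]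
        _ ≤ C'' * T n ^ (1/p) := hdata n
    have hr0 : T n ^ (1/p) ≠ 0 := by
      rw [Ne, ENNReal.rpow_eq_zero_iff]
      rintro (⟨h0, _⟩ | ⟨htop, _⟩)
      · exact hTn0 h0
      · exact hTtop n htop
    have hrt : T n ^ (1/p) ≠ ⊤ := by
      rw [Ne, ENNReal.rpow_eq_top_iff]
      rintro (⟨h0, _⟩ | ⟨htop, _⟩)
      · exact hTn0 h0
      · exact hTtop n htop
    have h4 := (ENNReal.mul_le_mul_iff_left hr0 hrt).1 h3
    have h5 : (m:ℝ≥0∞) ≤ T n ^ ((p-1)/p) := by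
      have h6 := ENNReal.rpow_le_rpow hn.le (by positivity : (0:ℝ) ≤ (p-1)/p)
      rwa [← ENNReal.rpow_mul, show (p/(p-1)) * ((p-1)/p) = 1 by field_simp,
        ENNReal.rpow_one] at h6
    calc (c0 * Uq) * m ≤ c0 * Uq * T n ^ ((p-1)/p) := mul_le_mul_right h5 _
      _ ≤ C'' := h4
  exact hCtop (ennreal_eq_top_of_forall_nat (mul_ne_zero hc0 hUq0) hfin)

end MainCtx2

section MainCtx3

variable {p q r : ℝ} {a b : EReal} {u v : ℝ → ℝ≥0∞} {N : ℤ} {x : ℤ → ℝ}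

lemma Ioo_disj (hxlt : ∀ k : ℤ, N ≤ k → x k < x (k + 1)) {i k : ℕ} (hik : i ≠ k) :
    ∀ s ∈ Ioo (x (N + (i:ℤ))) (x (N + 1 + (i:ℤ))),
      s ∉ Ioo (x (N + (k:ℤ))) (x (N + 1 + (k:ℤ))) := by
  intro s hsi hsk
  rcases lt_or_gt_of_ne hik with h | h
  · have hle : x (N + 1 + (i:ℤ)) ≤ x (N + (k:ℤ)) := x_mono hxlt (by omega) (by omega)
    have := hsi.2; have := hsk.1; linarith
  · have hle : x (N + 1 + (k:ℤ)) ≤ x (N + (i:ℤ)) := x_mono hxlt (by omega) (by omega)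
    have := hsi.1; have := hsk.2; linarith

lemma rpow_identity {p : ℝ} (hp1 : 1 < p) {w : ℝ≥0∞} (h0 : w ≠ 0) (ht : w ≠ ⊤) :
    (w ^ (-(1/(p-1)))) ^ p * w = w ^ (-(1/(p-1))) := by
  have hpm : (0:ℝ) < p - 1 := by linarith
  rw [← ENNReal.rpow_mul]
  nth_rewrite 2 [show w = w ^ (1:ℝ) from (ENNReal.rpow_one _).symm]
  rw [← ENNReal.rpow_add _ _ h0 ht]
  congr 1
  field_simp
  ring

lemma rpow_combine {p : ℝ} (hp0 : p ≠ 0) {Φ : ℝ≥0∞} (h0 : Φ ≠ 0) (ht : Φ ≠ ⊤) :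
    Φ ^ (-(1/p)) * Φ = Φ ^ ((p-1)/p) := by
  nth_rewrite 2 [show Φ = Φ ^ (1:ℝ) from (ENNReal.rpow_one _).symm]
  rw [← ENNReal.rpow_add _ _ h0 ht]
  congr 1
  field_simp
  ring

lemma blowup_eq1 (hq : 0 < q) (hr : 0 < r)
    (hu : IsWeight a b u) (hv : IsWeight a b v)
    (hxa : (x N : EReal) = a)
    (hxlt : ∀ k : ℤ, N ≤ k → x k < x (k + 1))
    (hxab : ∀ k : ℤ, N ≤ k → a ≤ (x k : EReal) ∧ (x k : EReal) ≤ b)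
    {C'' : ℝ≥0∞}
    (hC'' : ∀ f : ℝ → ℝ≥0∞, Measurable f → lhsD2 a N x q r u f ≤ C'' * rhsD N x 1 v f)
    (hCtop : C'' ≠ ⊤) (k : ℕ) :
    essSup (fun s => (v s)⁻¹)
      (volume.restrict (Ioo (x (N + (k:ℤ))) (x (N + 1 + (k:ℤ))))) ≠ ⊤ := by
  intro hEtop
  set α : ℝ := x (N + (k:ℤ)) with hα
  set β : ℝ := x (N + 1 + (k:ℤ)) with hβ
  have hvI : ∀ s ∈ Ioo α β, 0 < v s ∧ v s < ⊤ := fun s hs =>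
    hv.2 s (Ioo_subset_io hxab (by omega) (by omega) hs)
  have hinvm : Measurable (fun s => (v s)⁻¹) := hv.1.inv
  set B : ℕ → Set ℝ := fun n => {s | (n:ℝ≥0∞) < (v s)⁻¹} ∩ Ioo α β with hB
  have hBm : ∀ n, MeasurableSet (B n) :=
    fun n => (hinvm measurableSet_Ioi).inter measurableSet_Ioo
  have hBmem : ∀ (n : ℕ) (s : ℝ), s ∈ B n ↔ ((n:ℝ≥0∞) < (v s)⁻¹ ∧ s ∈ Ioo α β) := by
    intro n s; rw [hB]; exact Iff.rfl
  have hBpos : ∀ n, 0 < volume (B n) := by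
    intro n
    have h := meas_pos_of_lt_essSup (S := Ioo α β) measurableSet_Ioo
      (t := (n:ℝ≥0∞)) (by rw [hEtop]; exact ENNReal.coe_lt_top) hinvm
    rwa [Measure.restrict_apply
      (show MeasurableSet {s : ℝ | (n:ℝ≥0∞) < (v s)⁻¹} from hinvm measurableSet_Ioi)] at h
  have hBfin : ∀ n, volume (B n) ≠ ⊤ := by
    intro n
    refine ((measure_mono (inter_subset_right : B n ⊆ Ioo α β)).trans_lt ?_).ne
    rw [Real.volume_Ioo]; exact ENNReal.ofReal_lt_top
  set fn : ℕ → ℝ → ℝ≥0∞ := fun n => (B n).indicator (fun s => (v s)⁻¹) with hfndef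
  have hfnm : ∀ n, Measurable (fn n) := fun n => hinvm.indicator (hBm n)
  have hrhs : ∀ n, rhsD N x 1 v (fn n) = volume (B n) := by
    intro n
    rw [rhsD]
    rw [show (1:ℝ)/(1:ℝ) = 1 by norm_num, ENNReal.rpow_one]
    rw [tsum_eq_single k ?_]
    · have hcong : ∀ s ∈ Ioo α β,
          fn n s ^ (1:ℝ) * v s = (B n).indicator (fun _ => (1:ℝ≥0∞)) s := by
        intro s hs
        rw [ENNReal.rpow_one]
        by_cases hs' : s ∈ B n
        · simp only [hfndef]
          rw [Set.indicator_of_mem hs', Set.indicator_of_mem hs']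
          exact ENNReal.inv_mul_cancel (hvI s hs).1.ne' (hvI s hs).2.ne
        · simp only [hfndef]
          rw [Set.indicator_of_notMem hs', Set.indicator_of_notMem hs', zero_mul]
      rw [setLIntegral_congr_fun measurableSet_Ioo (hcong),
        setLintegral_indicator' (hBm n),
        inter_eq_self_of_subset_left (fun s hs => ((hBmem n s).1 hs).2),
        setLIntegral_const, one_mul]
    · intro i hik
      have hz : ∀ s ∈ Ioo (x (N + (i:ℤ))) (x (N + 1 + (i:ℤ))), fn n s ^ (1:ℝ) * v s = 0 := by
        intro s hs
        have hns : s ∉ B n := fun h => Ioo_disj hxlt hik s hs ((hBmem n s).1 h).2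
        simp only [hfndef]
        rw [Set.indicator_of_notMem hns, ENNReal.rpow_one, zero_mul]
      rw [setLIntegral_congr_fun measurableSet_Ioo (hz), lintegral_zero]
  set c0 : ℝ≥0∞ := ((2:ℝ≥0∞) ^ (-((N + 1 + k : ℤ) : ℝ))) ^ (1/r) with hc0def
  set Uq : ℝ≥0∞ := (∫⁻ t in Ioo (x (N + 1 + (k:ℤ))) (x (N + 2 + (k:ℤ))), u t) ^ (1/q) with hUqdef
  have hdata : ∀ n : ℕ, c0 * ((n:ℝ≥0∞) * volume (B n)) * Uq ≤ C'' * volume (B n) := by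
    intro n
    have hion : (n:ℝ≥0∞) * volume (B n) ≤ ∫⁻ s in io a (x (N + 1 + (k:ℤ))), fn n s := by
      rw [← hxa, io_coe_coe]
      simp only [hfndef]
      rw [setLintegral_indicator' (hBm n)]
      have hsub2 : B n ∩ Ioo (x N) (x (N + 1 + (k:ℤ))) = B n := by
        refine inter_eq_self_of_subset_left fun s hs => ?_
        obtain ⟨_, hs2⟩ := (hBmem n s).1 hs
        exact ⟨lt_of_le_of_lt (x_mono hxlt le_rfl (by omega)) hs2.1, hs2.2⟩
      rw [hsub2]
      calc (n:ℝ≥0∞) * volume (B n) = ∫⁻ _ in B n, (n:ℝ≥0∞) := (setLIntegral_const _ _).symm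
        _ ≤ ∫⁻ s in B n, (v s)⁻¹ :=
            setLIntegral_mono' (hBm n) (fun s hs => ((hBmem n s).1 hs).1.le)
    calc c0 * ((n:ℝ≥0∞) * volume (B n)) * Uq
        ≤ c0 * (∫⁻ s in io a (x (N + 1 + (k:ℤ))), fn n s) * Uq :=
          mul_le_mul_left (mul_le_mul_right hion _) _
      _ ≤ lhsD2 a N x q r u (fn n) := lhsD2_ge hq hr k (fn n)
      _ ≤ C'' * rhsD N x 1 v (fn n) := hC'' (fn n) (hfnm n)
      _ = C'' * volume (B n) := by rw [hrhs n]
  have hc0 : c0 ≠ 0 := by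
    rw [hc0def]
    exact (ENNReal.rpow_pos (ENNReal.rpow_pos (by norm_num) (by norm_num)) (by
      rw [Ne, ENNReal.rpow_eq_top_iff]
      rintro (⟨h0, _⟩ | ⟨htop, _⟩) <;> simp_all)).ne'
  have hUq0 : Uq ≠ 0 := by
    rw [hUqdef, Ne, ENNReal.rpow_eq_zero_iff]
    rintro (⟨h0, _⟩ | ⟨_, hneg⟩)
    · exact (U_pos hu hxlt hxab k).ne' h0
    · have := one_div_pos.2 hq; linarith
  have hfin : ∀ n : ℕ, (c0 * Uq) * n ≤ C'' := by
    intro n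
    have h3 : ((c0 * Uq) * n) * volume (B n) ≤ C'' * volume (B n) := by
      calc ((c0 * Uq) * n) * volume (B n) = c0 * ((n:ℝ≥0∞) * volume (B n)) * Uq := by ring
        _ ≤ C'' * volume (B n) := hdata n
    exact (ENNReal.mul_le_mul_iff_left (hBpos n).ne' (hBfin n)).1 h3
  exact hCtop (ennreal_eq_top_of_forall_nat (mul_ne_zero hc0 hUq0) hfin)

end MainCtx3

section MainCtx4

variable {p q r : ℝ} {a b : EReal} {u v : ℝ → ℝ≥0∞} {N : ℤ} {x : ℤ → ℝ}

lemma construct_gt1 (hp1 : 1 < p) (hq : 0 < q) (hr : 0 < r)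
    (hu : IsWeight a b u) (hv : IsWeight a b v)
    (hxa : (x N : EReal) = a)
    (hxlt : ∀ k : ℤ, N ≤ k → x k < x (k + 1))
    (hxab : ∀ k : ℤ, N ≤ k → a ≤ (x k : EReal) ∧ (x k : EReal) ≤ b)
    {C'' : ℝ≥0∞}
    (hC'' : ∀ f : ℝ → ℝ≥0∞, Measurable f → lhsD2 a N x q r u f ≤ C'' * rhsD N x p v f)
    (hΦtop : ∀ j : ℕ,
      (∫⁻ s in Ioo (x (N + (j:ℤ))) (x (N + 1 + (j:ℤ))), v s ^ (-(1/(p-1)))) ≠ ⊤)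
    (aseq : ℕ → ℝ≥0) :
    lhsSeq N x p q r u v aseq ≤ C'' * (∑' k : ℕ, ((aseq k : ℝ≥0∞)) ^ p) ^ (1/p) := by
  have hp0 : (0:ℝ) < p := by linarith
  set φ : ℝ → ℝ≥0∞ := fun s => v s ^ (-(1/(p-1))) with hφdef
  set Φ : ℕ → ℝ≥0∞ := fun j => ∫⁻ s in Ioo (x (N + (j:ℤ))) (x (N + 1 + (j:ℤ))), φ s with hΦdef
  have hvI : ∀ (j : ℕ), ∀ s ∈ Ioo (x (N + (j:ℤ))) (x (N + 1 + (j:ℤ))), 0 < v s ∧ v s < ⊤ :=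
    fun j s hs => hv.2 s (Ioo_subset_io hxab (by omega) (by omega) hs)
  have hφm : Measurable φ := hv.1.pow_const _
  have hΦ0 : ∀ j, Φ j ≠ 0 := by
    intro j
    refine (setLintegral_pos ?_ hφm ?_).ne'
    · rw [Real.volume_Ioo]; exact ENNReal.ofReal_pos.2 (by linarith [x_succ_lt hxlt j])
    · intro s hs
      have h := hvI j s hs
      exact ENNReal.rpow_pos h.1 h.2.ne
  set g : ℕ → ℝ → ℝ≥0∞ := fun j => (Ioo (x (N + (j:ℤ))) (x (N + 1 + (j:ℤ)))).indicator
      (fun s => (aseq j : ℝ≥0∞) * φ s * (Φ j) ^ (-(1/p))) with hgdef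
  have hgm : ∀ j, Measurable (g j) :=
    fun j => ((measurable_const.mul hφm).mul measurable_const).indicator measurableSet_Ioo
  set f : ℝ → ℝ≥0∞ := fun s => ∑' j, g j s with hfdef
  have hfm : Measurable f := Measurable.ennreal_tsum hgm
  have hfon : ∀ (j : ℕ), ∀ s ∈ Ioo (x (N + (j:ℤ))) (x (N + 1 + (j:ℤ))), f s = g j s := by
    intro j s hs
    rw [hfdef]
    refine tsum_eq_single j fun i hij => ?_
    simp only [hgdef]
    exact Set.indicator_of_notMem (Ioo_disj hxlt (fun h => hij h.symm) s hs) _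
  have hCCp : ∀ j : ℕ, ((Φ j) ^ (-(1/p))) ^ p = (Φ j)⁻¹ := by
    intro j
    rw [← ENNReal.rpow_mul, show -(1/p) * p = (-1:ℝ) by field_simp, ENNReal.rpow_neg_one]
  have hgpv : ∀ j : ℕ,
      ∫⁻ s in Ioo (x (N + (j:ℤ))) (x (N + 1 + (j:ℤ))), f s ^ p * v s
        = ((aseq j : ℝ≥0∞)) ^ p := by
    intro j
    have hcong : ∀ s ∈ Ioo (x (N + (j:ℤ))) (x (N + 1 + (j:ℤ))),
        f s ^ p * v s = (((aseq j : ℝ≥0∞)) ^ p * (Φ j)⁻¹) * φ s := by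
      intro s hs
      rw [hfon j s hs]
      simp only [hgdef]
      rw [Set.indicator_of_mem hs]
      have hps := hvI j s hs
      calc ((aseq j : ℝ≥0∞) * φ s * Φ j ^ (-(1/p))) ^ p * v s
          = ((aseq j : ℝ≥0∞)) ^ p * ((Φ j ^ (-(1/p))) ^ p) * (φ s ^ p * v s) := by
            rw [ENNReal.mul_rpow_of_nonneg _ _ hp0.le, ENNReal.mul_rpow_of_nonneg _ _ hp0.le]
            ring
        _ = (((aseq j : ℝ≥0∞)) ^ p * (Φ j)⁻¹) * φ s := by
            rw [hCCp j]
            congr 1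
            simp only [hφdef]
            exact rpow_identity hp1 hps.1.ne' hps.2.ne
    rw [setLIntegral_congr_fun measurableSet_Ioo (hcong),
      lintegral_const_mul' _ _ (ENNReal.mul_ne_top
        (ENNReal.rpow_lt_top_of_nonneg hp0.le ENNReal.coe_ne_top).ne
        (ENNReal.inv_ne_top.2 (hΦ0 j)))]
    have hint : ∫⁻ s in Ioo (x (N + (j:ℤ))) (x (N + 1 + (j:ℤ))), φ s = Φ j := rfl
    rw [hint, mul_assoc, ENNReal.inv_mul_cancel (hΦ0 j) (hΦtop j), mul_one]
  have hgint : ∀ j : ℕ, ∫⁻ s in Ioo (x (N + (j:ℤ))) (x (N + 1 + (j:ℤ))), f s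
      = (aseq j : ℝ≥0∞) * Vp p v (x (N + (j:ℤ))) (x (N + 1 + (j:ℤ))) := by
    intro j
    have hcong2 : ∀ s ∈ Ioo (x (N + (j:ℤ))) (x (N + 1 + (j:ℤ))),
        f s = ((aseq j : ℝ≥0∞) * (Φ j) ^ (-(1/p))) * φ s := by
      intro s hs
      rw [hfon j s hs]
      simp only [hgdef]
      rw [Set.indicator_of_mem hs]
      ring
    rw [setLIntegral_congr_fun measurableSet_Ioo (hcong2),
      lintegral_const_mul' _ _ (ENNReal.mul_ne_top ENNReal.coe_ne_top (by
        rw [Ne, ENNReal.rpow_eq_top_iff]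
        rintro (⟨h0, _⟩ | ⟨htop, _⟩)
        · exact hΦ0 j h0
        · exact hΦtop j htop))]
    have hint : ∫⁻ s in Ioo (x (N + (j:ℤ))) (x (N + 1 + (j:ℤ))), φ s = Φ j := rfl
    rw [hint, mul_assoc]
    congr 1
    rw [Vp, if_neg hp1.ne', io_coe_coe]
    have hint2 : (∫⁻ s in Ioo (x (N + (j:ℤ))) (x (N + 1 + (j:ℤ))), v s ^ (-(1/(p-1)))) = Φ j :=
      rfl
    rw [hint2]
    exact rpow_combine hp0.ne' (hΦ0 j) (hΦtop j)
  have hlhs : ∀ k : ℕ,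
      ∑ j ∈ Finset.range (k+1),
          (aseq j : ℝ≥0∞) * Vp p v (x (N + (j:ℤ))) (x (N + 1 + (j:ℤ)))
        ≤ ∫⁻ s in io a (x (N + 1 + (k:ℤ))), f s := by
    intro k
    rw [← hxa, io_coe_coe, decomp' hxlt k f]
    exact Finset.sum_le_sum fun j _ => le_of_eq (hgint j).symm
  calc lhsSeq N x p q r u v aseq ≤ lhsD2 a N x q r u f := by
        rw [lhsSeq, lhsD2]
        refine ENNReal.rpow_le_rpow (ENNReal.tsum_le_tsum fun k => ?_) (by positivity)
        rw [mul_right_comm]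
        exact mul_le_mul_left (mul_le_mul_right
          (ENNReal.rpow_le_rpow (hlhs k) hr.le) _) _
    _ ≤ C'' * rhsD N x p v f := hC'' f hfm
    _ = C'' * (∑' k : ℕ, ((aseq k : ℝ≥0∞)) ^ p) ^ (1/p) := by
        rw [rhsD]
        congr 2
        exact tsum_congr fun j => hgpv j

lemma construct_eq1 (hq : 0 < q) (hr : 0 < r)
    (hu : IsWeight a b u) (hv : IsWeight a b v)
    (hxa : (x N : EReal) = a)
    (hxlt : ∀ k : ℤ, N ≤ k → x k < x (k + 1))
    (hxab : ∀ k : ℤ, N ≤ k → a ≤ (x k : EReal) ∧ (x k : EReal) ≤ b)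
    {C'' : ℝ≥0∞}
    (hC'' : ∀ f : ℝ → ℝ≥0∞, Measurable f → lhsD2 a N x q r u f ≤ C'' * rhsD N x 1 v f)
    (hEtop : ∀ j : ℕ, essSup (fun s => (v s)⁻¹)
      (volume.restrict (Ioo (x (N + (j:ℤ))) (x (N + 1 + (j:ℤ))))) ≠ ⊤)
    (aseq : ℕ → ℝ≥0) :
    lhsSeq N x 1 q r u v aseq ≤ C'' * (∑' k : ℕ, ((aseq k : ℝ≥0∞)) ^ (1:ℝ)) ^ (1/(1:ℝ)) := by
  have hXeq : (∑' k : ℕ, ((aseq k : ℝ≥0∞)) ^ (1:ℝ)) ^ (1/(1:ℝ))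
      = ∑' k : ℕ, (aseq k : ℝ≥0∞) := by
    rw [show (1:ℝ)/(1:ℝ) = 1 by norm_num, ENNReal.rpow_one]
    exact tsum_congr fun k => ENNReal.rpow_one _
  rw [hXeq]
  refine ENNReal.le_of_forall_lt_one_mul_le fun ε hε => ?_
  set E : ℕ → ℝ≥0∞ := fun j => essSup (fun s => (v s)⁻¹)
    (volume.restrict (Ioo (x (N + (j:ℤ))) (x (N + 1 + (j:ℤ))))) with hEdef
  have hVpE : ∀ j : ℕ, Vp 1 v (x (N + (j:ℤ))) (x (N + 1 + (j:ℤ))) = E j := by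
    intro j
    rw [Vp, if_pos rfl, io_coe_coe]
  have hE0 : ∀ j, E j ≠ 0 := by
    intro j
    have := V_pos le_rfl hv hxlt hxab j
    rw [hVpE j] at this
    exact this.ne'
  have hvI : ∀ (j : ℕ), ∀ s ∈ Ioo (x (N + (j:ℤ))) (x (N + 1 + (j:ℤ))), 0 < v s ∧ v s < ⊤ :=
    fun j s hs => hv.2 s (Ioo_subset_io hxab (by omega) (by omega) hs)
  have hinvm : Measurable (fun s => (v s)⁻¹) := hv.1.inv
  set A : ℕ → Set ℝ := fun j => {s | ε * E j < (v s)⁻¹}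
      ∩ Ioo (x (N + (j:ℤ))) (x (N + 1 + (j:ℤ))) with hAdef
  have hAm : ∀ j, MeasurableSet (A j) :=
    fun j => (hinvm measurableSet_Ioi).inter measurableSet_Ioo
  have hAmem : ∀ (j : ℕ) (s : ℝ), s ∈ A j ↔
      (ε * E j < (v s)⁻¹ ∧ s ∈ Ioo (x (N + (j:ℤ))) (x (N + 1 + (j:ℤ)))) := by
    intro j s; rw [hAdef]; exact Iff.rfl
  have hApos : ∀ j, 0 < volume (A j) := by
    intro j
    have hlt : ε * E j < E j := by
      calc ε * E j < 1 * E j := (ENNReal.mul_lt_mul_iff_left (hE0 j) (hEtop j)).2 hε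
        _ = E j := one_mul _
    have h := meas_pos_of_lt_essSup measurableSet_Ioo hlt hinvm
    rwa [Measure.restrict_apply
      (show MeasurableSet {s : ℝ | ε * E j < (v s)⁻¹} from hinvm measurableSet_Ioi)] at h
  have hAfin : ∀ j, volume (A j) ≠ ⊤ := by
    intro j
    refine ((measure_mono inter_subset_right).trans_lt ?_).ne
    rw [Real.volume_Ioo]; exact ENNReal.ofReal_lt_top
  set g : ℕ → ℝ → ℝ≥0∞ := fun j => (A j).indicator
      (fun s => (aseq j : ℝ≥0∞) * (v s)⁻¹ * (volume (A j))⁻¹) with hgdef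
  have hgm : ∀ j, Measurable (g j) :=
    fun j => ((measurable_const.mul hinvm).mul measurable_const).indicator (hAm j)
  set f : ℝ → ℝ≥0∞ := fun s => ∑' j, g j s with hfdef
  have hfm : Measurable f := Measurable.ennreal_tsum hgm
  have hfon : ∀ (j : ℕ), ∀ s ∈ Ioo (x (N + (j:ℤ))) (x (N + 1 + (j:ℤ))), f s = g j s := by
    intro j s hs
    rw [hfdef]
    refine tsum_eq_single j fun i hij => ?_
    simp only [hgdef]
    refine Set.indicator_of_notMem (fun h => ?_) _
    exact Ioo_disj hxlt (fun h' => hij h'.symm) s hs ((hAmem i s).1 h).2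
  have hrhsj : ∀ j : ℕ,
      ∫⁻ s in Ioo (x (N + (j:ℤ))) (x (N + 1 + (j:ℤ))), f s ^ (1:ℝ) * v s
        = (aseq j : ℝ≥0∞) := by
    intro j
    have hcong : ∀ s ∈ Ioo (x (N + (j:ℤ))) (x (N + 1 + (j:ℤ))),
        f s ^ (1:ℝ) * v s
          = (A j).indicator (fun _ => (aseq j : ℝ≥0∞) * (volume (A j))⁻¹) s := by
      intro s hs
      rw [ENNReal.rpow_one, hfon j s hs]
      simp only [hgdef]
      by_cases hs' : s ∈ A j
      · rw [Set.indicator_of_mem hs', Set.indicator_of_mem hs']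
        have hps := hvI j s hs
        calc (aseq j : ℝ≥0∞) * (v s)⁻¹ * (volume (A j))⁻¹ * v s
            = (aseq j : ℝ≥0∞) * (volume (A j))⁻¹ * ((v s)⁻¹ * v s) := by ring
          _ = (aseq j : ℝ≥0∞) * (volume (A j))⁻¹ := by
              rw [ENNReal.inv_mul_cancel hps.1.ne' hps.2.ne, mul_one]
      · rw [Set.indicator_of_notMem hs', Set.indicator_of_notMem hs', zero_mul]
    rw [setLIntegral_congr_fun measurableSet_Ioo (hcong),
      setLintegral_indicator' (hAm j),
      inter_eq_self_of_subset_left (fun s hs => ((hAmem j s).1 hs).2),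
      setLIntegral_const, mul_assoc,
      ENNReal.inv_mul_cancel (hApos j).ne' (hAfin j), mul_one]
  have hlhsj : ∀ j : ℕ, ε * ((aseq j : ℝ≥0∞) * E j)
      ≤ ∫⁻ s in Ioo (x (N + (j:ℤ))) (x (N + 1 + (j:ℤ))), f s := by
    intro j
    have hcong2 : ∀ s ∈ Ioo (x (N + (j:ℤ))) (x (N + 1 + (j:ℤ))), f s = g j s := hfon j
    rw [setLIntegral_congr_fun measurableSet_Ioo (hcong2)]
    simp only [hgdef]
    rw [setLintegral_indicator' (hAm j),
      inter_eq_self_of_subset_left (fun s hs => ((hAmem j s).1 hs).2)]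
    calc ε * ((aseq j : ℝ≥0∞) * E j)
        = ((aseq j : ℝ≥0∞) * (ε * E j) * (volume (A j))⁻¹) * volume (A j) := by
          rw [mul_assoc, ENNReal.inv_mul_cancel (hApos j).ne' (hAfin j), mul_one]; ring
      _ = ∫⁻ _ in A j, (aseq j : ℝ≥0∞) * (ε * E j) * (volume (A j))⁻¹ :=
          (setLIntegral_const _ _).symm
      _ ≤ ∫⁻ s in A j, (aseq j : ℝ≥0∞) * (v s)⁻¹ * (volume (A j))⁻¹ := by
          refine setLIntegral_mono' (hAm j) fun s hs => ?_
          exact mul_le_mul_left (mul_le_mul_right ((hAmem j s).1 hs).1.le _) _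
  have hkey : ∀ k : ℕ,
      ε * ∑ j ∈ Finset.range (k+1),
          (aseq j : ℝ≥0∞) * Vp 1 v (x (N + (j:ℤ))) (x (N + 1 + (j:ℤ)))
        ≤ ∫⁻ s in io a (x (N + 1 + (k:ℤ))), f s := by
    intro k
    rw [← hxa, io_coe_coe, decomp' hxlt k f, Finset.mul_sum]
    refine Finset.sum_le_sum fun j _ => ?_
    rw [hVpE j, ← mul_assoc, mul_comm ε ((aseq j : ℝ≥0∞)), mul_assoc]
    exact le_trans (le_of_eq (by ring)) (hlhsj j)
  have hεr : ε * lhsSeq N x 1 q r u v aseq ≤ lhsD2 a N x q r u f := by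
    rw [lhsSeq, lhsD2]
    have hee : ε = (ε ^ r) ^ (1/r) := by
      rw [← ENNReal.rpow_mul, mul_one_div_cancel hr.ne', ENNReal.rpow_one]
    rw [hee, ← ENNReal.mul_rpow_of_nonneg _ _ (one_div_pos.2 hr).le,
      ← ENNReal.tsum_mul_left]
    refine ENNReal.rpow_le_rpow (ENNReal.tsum_le_tsum fun k => ?_) (by positivity)
    calc ε ^ r * ((2:ℝ≥0∞) ^ (-((N + 1 + k : ℤ) : ℝ)) *
          (∫⁻ t in Ioo (x (N + 1 + (k:ℤ))) (x (N + 2 + (k:ℤ))), u t) ^ (r/q) *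
          (∑ j ∈ Finset.range (k+1),
            (aseq j : ℝ≥0∞) * Vp 1 v (x (N + (j:ℤ))) (x (N + 1 + (j:ℤ)))) ^ r)
        = (2:ℝ≥0∞) ^ (-((N + 1 + k : ℤ) : ℝ)) *
          (ε * ∑ j ∈ Finset.range (k+1),
            (aseq j : ℝ≥0∞) * Vp 1 v (x (N + (j:ℤ))) (x (N + 1 + (j:ℤ)))) ^ r *
          (∫⁻ t in Ioo (x (N + 1 + (k:ℤ))) (x (N + 2 + (k:ℤ))), u t) ^ (r/q) := by
          rw [ENNReal.mul_rpow_of_nonneg _ _ hr.le]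
          ring
      _ ≤ (2:ℝ≥0∞) ^ (-((N + 1 + k : ℤ) : ℝ)) *
          (∫⁻ s in io a (x (N + 1 + (k:ℤ))), f s) ^ r *
          (∫⁻ t in Ioo (x (N + 1 + (k:ℤ))) (x (N + 2 + (k:ℤ))), u t) ^ (r/q) :=
          mul_le_mul_left (mul_le_mul_right
            (ENNReal.rpow_le_rpow (hkey k) hr.le) _) _
  calc ε * lhsSeq N x 1 q r u v aseq ≤ lhsD2 a N x q r u f := hεr
    _ ≤ C'' * rhsD N x 1 v f := hC'' f hfm
    _ = C'' * ∑' k : ℕ, (aseq k : ℝ≥0∞) := by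
        rw [rhsD, show (1:ℝ)/(1:ℝ) = 1 by norm_num, ENNReal.rpow_one]
        congr 1
        exact tsum_congr fun j => hrhsj j

end MainCtx4

section MainCtx5

variable {p q r : ℝ} {a b : EReal} {u v : ℝ → ℝ≥0∞} {N : ℤ} {x : ℤ → ℝ}

lemma main_construct (hp : 1 ≤ p) (hq : 0 < q) (hr : 0 < r)
    (hu : IsWeight a b u) (hv : IsWeight a b v)
    (hxa : (x N : EReal) = a)
    (hxlt : ∀ k : ℤ, N ≤ k → x k < x (k + 1))
    (hxab : ∀ k : ℤ, N ≤ k → a ≤ (x k : EReal) ∧ (x k : EReal) ≤ b)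
    {C'' : ℝ≥0∞}
    (hC'' : ∀ f : ℝ → ℝ≥0∞, Measurable f → lhsD2 a N x q r u f ≤ C'' * rhsD N x p v f)
    (aseq : ℕ → ℝ≥0) :
    lhsSeq N x p q r u v aseq ≤ C'' * (∑' k : ℕ, ((aseq k : ℝ≥0∞)) ^ p) ^ (1/p) := by
  have hp0 : (0:ℝ) < p := by linarith
  by_cases hCtop : C'' = ⊤
  · subst hCtop
    by_cases hX : (∑' k : ℕ, ((aseq k : ℝ≥0∞)) ^ p) = 0
    · have hz : ∀ k : ℕ, (aseq k : ℝ≥0∞) = 0 := by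
        intro k
        have h := (ENNReal.tsum_eq_zero.1 hX) k
        rw [ENNReal.rpow_eq_zero_iff] at h
        rcases h with ⟨h0, _⟩ | ⟨ht, _⟩
        · exact h0
        · exact absurd ht ENNReal.coe_ne_top
      have hL : lhsSeq N x p q r u v aseq = 0 := by
        rw [lhsSeq]
        have hterm : ∀ k : ℕ, (2 : ℝ≥0∞) ^ (-((N + 1 + k : ℤ) : ℝ)) *
            (∫⁻ t in Ioo (x (N + 1 + k)) (x (N + 2 + k)), u t) ^ (r / q) *
            (∑ j ∈ Finset.range (k + 1),
              (aseq j : ℝ≥0∞) * Vp p v (x (N + j)) (x (N + 1 + j))) ^ r = 0 := by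
          intro k
          have hsum0 : (∑ j ∈ Finset.range (k + 1),
              (aseq j : ℝ≥0∞) * Vp p v (x (N + j)) (x (N + 1 + j))) = 0 :=
            Finset.sum_eq_zero fun j _ => by rw [hz j, zero_mul]
          rw [hsum0, ENNReal.zero_rpow_of_pos hr, mul_zero]
        rw [tsum_congr hterm, tsum_zero, ENNReal.zero_rpow_of_pos (one_div_pos.2 hr)]
      rw [hL]
      exact zero_le
    · rw [ENNReal.top_mul (by
        rw [Ne, ENNReal.rpow_eq_zero_iff]
        rintro (⟨h0, _⟩ | ⟨_, hneg⟩)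
        · exact hX h0
        · have := one_div_pos.2 hp0; linarith)]
      exact le_top
  · rcases eq_or_lt_of_le hp with hp1 | hp1
    · subst hp1
      exact construct_eq1 hq hr hu hv hxa hxlt hxab hC''
        (fun j => blowup_eq1 hq hr hu hv hxa hxlt hxab hC'' hCtop j) aseq
    · exact construct_gt1 hp1 hq hr hu hv hxa hxlt hxab hC''
        (fun j => blowup_gt1 hp1 hq hr hu hv hxa hxlt hxab hC'' hCtop j) aseq

end MainCtx5

theorem discrete_reduction_second (p q r : ℝ) (hp : 1 ≤ p) (hq : 0 < q)
    (hr : 0 < r) (d₁ d₂ : ℝ≥0∞) (hd₁ : 0 < d₁) (hd₂ : d₂ < ⊤) :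
    ∃ c₁ c₂ : ℝ≥0∞, 0 < c₁ ∧ c₂ < ⊤ ∧
      ∀ (a b : EReal), a < b → ∀ u v w : ℝ → ℝ≥0∞,
        IsWeight a b u → IsWeight a b v → IsWeight a b w →
        ∀ (N : ℤ) (x : ℤ → ℝ), IsDiscretizing a b w N x d₁ d₂ →
        ((∃ C'' : ℝ≥0∞, 0 < C'' ∧ C'' < ⊤ ∧ ∀ f : ℝ → ℝ≥0∞, Measurable f →
            lhsD2 a N x q r u f ≤ C'' * rhsD N x p v f) ↔
          (∃ C : ℝ≥0∞, 0 < C ∧ C < ⊤ ∧ ∀ aseq : ℕ → ℝ≥0,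
            lhsSeq N x p q r u v aseq ≤ C * (∑' k : ℕ, (aseq k : ℝ≥0∞) ^ p) ^ (1 / p))) ∧
        c₁ * sInf {C : ℝ≥0∞ | ∀ aseq : ℕ → ℝ≥0,
              lhsSeq N x p q r u v aseq ≤ C * (∑' k : ℕ, (aseq k : ℝ≥0∞) ^ p) ^ (1 / p)} ≤
            sInf {C'' : ℝ≥0∞ | ∀ f : ℝ → ℝ≥0∞, Measurable f →
              lhsD2 a N x q r u f ≤ C'' * rhsD N x p v f} ∧
        sInf {C'' : ℝ≥0∞ | ∀ f : ℝ → ℝ≥0∞, Measurable f →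
            lhsD2 a N x q r u f ≤ C'' * rhsD N x p v f} ≤
          c₂ * sInf {C : ℝ≥0∞ | ∀ aseq : ℕ → ℝ≥0,
              lhsSeq N x p q r u v aseq ≤ C * (∑' k : ℕ, (aseq k : ℝ≥0∞) ^ p) ^ (1 / p)} := by
  refine ⟨1, 1, zero_lt_one, ENNReal.one_lt_top, ?_⟩
  intro a b hab u v w hu hv hw N x hdisc
  obtain ⟨hxa, hxlt, hxab, _⟩ := hdisc
  have himp1 : ∀ C'' : ℝ≥0∞, (∀ f : ℝ → ℝ≥0∞, Measurable f →
      lhsD2 a N x q r u f ≤ C'' * rhsD N x p v f) →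
      ∀ aseq : ℕ → ℝ≥0,
        lhsSeq N x p q r u v aseq ≤ C'' * (∑' k : ℕ, (aseq k : ℝ≥0∞) ^ p) ^ (1 / p) :=
    fun C'' hC'' => main_construct hp hq hr hu hv hxa hxlt hxab hC''
  have himp2 : ∀ C : ℝ≥0∞, (∀ aseq : ℕ → ℝ≥0,
      lhsSeq N x p q r u v aseq ≤ C * (∑' k : ℕ, (aseq k : ℝ≥0∞) ^ p) ^ (1 / p)) →
      ∀ f : ℝ → ℝ≥0∞, Measurable f → lhsD2 a N x q r u f ≤ C * rhsD N x p v f :=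
    fun C hC f hf => main_holder hp hq hr hu hv hxa hxlt hxab hC hf
  refine ⟨?_, ?_, ?_⟩
  · constructor
    · rintro ⟨C'', hpos, hfin, hC''⟩
      exact ⟨C'', hpos, hfin, himp1 C'' hC''⟩
    · rintro ⟨C, hpos, hfin, hC⟩
      exact ⟨C, hpos, hfin, himp2 C hC⟩
  · rw [one_mul]
    exact le_sInf fun C'' hC'' => sInf_le (himp1 C'' hC'')
  · rw [one_mul]
    exact sInf_le_sInf fun C hC => himp2 C hC
end
end

section
/- Let -∞ ≤ a < b ≤ ∞, let 0 < p, q < ∞, let u, v, w be weights on (a,b), and let C > 0. Then the inequality (∫_a^b (∫_a^x f(s) u(s) ds)^q w(x) dx)^{1/q} ≤ C (∫_a^b f(x)^p v(x) dx)^{1/p} holds for all non-decreasing f ∈ 𝔐↑(a,b) if and only if the inequality (∫_a^b (∫_a^x (∫_a^t h(τ) dτ)^{1/p} u(t) dt)^q w(x) dx)^{p/q} ≤ C^p ∫_a^b h(x) (∫_x^b v) dx holds for all h ∈ 𝔐⁺(a,b). -/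
open MeasureTheory Set ENNReal Filter

noncomputable section

/-- The left-hand side of the Hardy inequality for non-decreasing functions. -/
def lhsMon (a b : EReal) (q : ℝ) (u w f : ℝ → ℝ≥0∞) : ℝ≥0∞ :=
  (∫⁻ x in io a b, (∫⁻ s in io a x, f s * u s) ^ q * w x) ^ (1 / q)

/-- The right-hand side (without the constant) of the inequality. -/
def rhsNorm (a b : EReal) (p : ℝ) (v f : ℝ → ℝ≥0∞) : ℝ≥0∞ :=
  (∫⁻ x in io a b, f x ^ p * v x) ^ (1 / p)

private lemma rpow_rpow (x : ℝ≥0∞) {c d : ℝ} (h : c * d = 1) : (x ^ c) ^ d = x := by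
  rw [← ENNReal.rpow_mul, h, ENNReal.rpow_one]

private lemma lim_mul_const (u : ℕ → ℝ≥0∞) (c : ℝ≥0∞) :
    (liminf u atTop) * c ≤ liminf (fun n => u n * c) atTop := by
  rw [liminf_eq_iSup_iInf_of_nat, liminf_eq_iSup_iInf_of_nat, ENNReal.iSup_mul]
  exact iSup_mono fun n => le_iInf₂ fun i hi => mul_le_mul_left (iInf₂_le i hi) c

private lemma lim_rpow (u : ℕ → ℝ≥0∞) {c : ℝ} (hc : 0 < c) :
    (liminf u atTop) ^ c ≤ liminf (fun n => u n ^ c) atTop := by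
  have key : ∀ s : ℕ → ℝ≥0∞, (⨆ n, s n) ^ c ≤ ⨆ n, s n ^ c := by
    intro s
    have h1 : ∀ n, s n ≤ (⨆ n, s n ^ c) ^ (1 / c) := fun n => by
      rw [← rpow_rpow (s n) (mul_one_div_cancel hc.ne')]
      exact ENNReal.rpow_le_rpow (le_iSup (fun n => s n ^ c) n) (by positivity)
    calc (⨆ n, s n) ^ c ≤ (((⨆ n, s n ^ c) ^ (1 / c))) ^ c :=
          ENNReal.rpow_le_rpow (iSup_le h1) hc.le
      _ = ⨆ n, s n ^ c := rpow_rpow _ (one_div_mul_cancel hc.ne')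
  rw [liminf_eq_iSup_iInf_of_nat, liminf_eq_iSup_iInf_of_nat]
  calc (⨆ n, ⨅ i, ⨅ _ : i ≥ n, u i) ^ c ≤ ⨆ n, (⨅ i, ⨅ _ : i ≥ n, u i) ^ c := key _
    _ ≤ ⨆ n, ⨅ i, ⨅ _ : i ≥ n, u i ^ c :=
        iSup_mono fun n => le_iInf₂ fun i hi => ENNReal.rpow_le_rpow (iInf₂_le i hi) hc.le

private lemma measurableSet_io (a b : EReal) : MeasurableSet (io a b) := by
  have : io a b = (fun x : ℝ => (x : EReal)) ⁻¹' (Set.Ioo a b) := rfl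
  rw [this]
  exact measurableSet_Ioo.preimage measurable_coe_real_ereal

private lemma io_inter_Iio {a b : EReal} {x : ℝ} (hx : x ∈ io a b) :
    io a (x : EReal) = io a b ∩ Iio x := by
  ext τ
  constructor
  · intro hτ
    exact ⟨⟨hτ.1, lt_trans hτ.2 hx.2⟩, EReal.coe_lt_coe_iff.1 hτ.2⟩
  · rintro ⟨hτ, hτx⟩
    exact ⟨hτ.1, EReal.coe_lt_coe_iff.2 hτx⟩

private lemma io_inter_Ioi {a b : EReal} {τ : ℝ} (hτ : τ ∈ io a b) :
    io (τ : EReal) b = io a b ∩ Ioi τ := by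
  ext x
  constructor
  · intro hx
    exact ⟨⟨lt_trans hτ.1 hx.1, hx.2⟩, EReal.coe_lt_coe_iff.1 hx.1⟩
  · rintro ⟨hx, hτx⟩
    exact ⟨EReal.coe_lt_coe_iff.2 hτx, hx.2⟩

private lemma swap_lemma (a b : EReal) {h v : ℝ → ℝ≥0∞} (hh : Measurable h) (hv : Measurable v) :
    ∫⁻ x in io a b, (∫⁻ τ in io a (x : EReal), h τ) * v x
      = ∫⁻ τ in io a b, h τ * ∫⁻ x in io (τ : EReal) b, v x := by
  have hI := measurableSet_io a b
  calc ∫⁻ x in io a b, (∫⁻ τ in io a (x : EReal), h τ) * v x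
      = ∫⁻ x in io a b, ∫⁻ τ in io a b, (if τ < x then h τ * v x else 0) := by
        refine setLIntegral_congr_fun hI (fun x hx => ?_)
        have : ∀ τ : ℝ, (if τ < x then h τ * v x else 0) = (Iio x).indicator h τ * v x := by
          intro τ
          by_cases hτ : τ < x <;> simp [Set.indicator_apply, hτ]
        rw [funext this]
        rw [lintegral_mul_const _ (hh.indicator measurableSet_Iio),
          lintegral_indicator measurableSet_Iio, Measure.restrict_restrict measurableSet_Iio]
        rw [io_inter_Iio hx, Set.inter_comm]
    _ = ∫⁻ τ in io a b, ∫⁻ x in io a b, (if τ < x then h τ * v x else 0) := by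
        refine lintegral_lintegral_swap ?_
        have hs : MeasurableSet {z : ℝ × ℝ | z.2 < z.1} :=
          measurableSet_lt measurable_snd measurable_fst
        exact ((hh.comp measurable_snd).mul (hv.comp measurable_fst)).ite hs
          measurable_const |>.aemeasurable
    _ = ∫⁻ τ in io a b, h τ * ∫⁻ x in io (τ : EReal) b, v x := by
        refine setLIntegral_congr_fun hI (fun τ hτ => ?_)
        have : ∀ x : ℝ, (if τ < x then h τ * v x else 0) = h τ * (Ioi τ).indicator v x := by
          intro x
          by_cases hx : τ < x <;> simp [Set.indicator_apply, hx]
        rw [funext this]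
        rw [lintegral_const_mul _ (hv.indicator measurableSet_Ioi),
          lintegral_indicator measurableSet_Ioi, Measure.restrict_restrict measurableSet_Ioi]
        rw [io_inter_Ioi hτ, Set.inter_comm]

private lemma key_identity {a b : EReal} {φ : ℝ → ℝ≥0∞} (hφm : Measurable φ)
    {r δ : ℝ} (hδ : 0 < δ) {M : ℝ≥0∞} (hM : M ≠ ⊤)
    (hbd : ∀ τ, φ τ ≤ M)
    (hsupp : ∀ τ, τ ≤ r → φ τ = 0)
    (hzero : ∀ τ : ℝ, ¬ a < (τ : EReal) → φ τ = 0)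
    (hmono : ∀ τ₁ τ₂ : ℝ, τ₁ ≤ τ₂ → (τ₂ : EReal) < b → φ τ₁ ≤ φ τ₂)
    {x : ℝ} (hx : (x : EReal) < b) :
    ∫⁻ τ in io a (x : EReal), M * (φ τ - φ (τ - δ)) = M * ∫⁻ τ in Ico (x - δ) x, φ τ := by
  have hψm : Measurable fun τ : ℝ => φ (τ - δ) := hφm.comp (measurable_id.sub_const δ)
  -- finiteness of tails
  have hfin : ∀ c : ℝ, ∫⁻ τ in Iio c, φ τ ≠ ⊤ := by
    intro c
    have hb : ∀ τ : ℝ, φ τ ≤ (Ioi r).indicator (fun _ => M) τ := by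
      intro τ
      by_cases hτ : r < τ
      · simpa [Set.indicator_apply, hτ] using hbd τ
      · simp [Set.indicator_apply, hτ, hsupp τ (not_lt.1 hτ)]
    have : ∫⁻ τ in Iio c, φ τ ≤ M * ENNReal.ofReal (c - r) := by
      calc ∫⁻ τ in Iio c, φ τ ≤ ∫⁻ τ in Iio c, (Ioi r).indicator (fun _ => M) τ :=
            lintegral_mono hb
        _ = M * volume (Ioi r ∩ Iio c) := by
            rw [lintegral_indicator measurableSet_Ioi, setLIntegral_const,
              Measure.restrict_apply measurableSet_Ioi]
        _ ≤ M * ENNReal.ofReal (c - r) := by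
            rw [Set.Ioi_inter_Iio, Real.volume_Ioo]
    exact ne_top_of_le_ne_top (ENNReal.mul_ne_top hM ENNReal.ofReal_ne_top) this
  -- step 0 : extend the integral to Iio x
  have step0 : ∫⁻ τ in io a (x : EReal), M * (φ τ - φ (τ - δ))
      = ∫⁻ τ in Iio x, M * (φ τ - φ (τ - δ)) := by
    have hio : MeasurableSet (io a (x : EReal)) := by
      have : io a (x : EReal) = (fun y : ℝ => (y : EReal)) ⁻¹' Set.Ioo a (x : EReal) := rfl
      rw [this]; exact measurableSet_Ioo.preimage measurable_coe_real_ereal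
    rw [← lintegral_indicator hio, ← lintegral_indicator measurableSet_Iio]
    congr 1
    funext τ
    by_cases hτ1 : τ ∈ io a (x : EReal)
    · have hτ2 : τ ∈ Iio x := EReal.coe_lt_coe_iff.1 hτ1.2
      rw [Set.indicator_of_mem hτ1, Set.indicator_of_mem hτ2]
    · rw [Set.indicator_of_notMem hτ1]
      by_cases hτ2 : τ ∈ Iio x
      · have hna : ¬ a < (τ : EReal) := fun hc => hτ1 ⟨hc, EReal.coe_lt_coe_iff.2 hτ2⟩
        have hna' : ¬ a < ((τ - δ : ℝ) : EReal) := fun hc =>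
          hna (lt_of_lt_of_le hc (EReal.coe_le_coe_iff.2 (by linarith)))
        rw [Set.indicator_of_mem hτ2, hzero τ hna, hzero _ hna']
        simp
      · rw [Set.indicator_of_notMem hτ2]
  rw [step0, lintegral_const_mul _ (f := fun τ => φ τ - φ (τ - δ)) (hφm.sub hψm)]
  congr 1
  -- change of variables for the shifted term
  have step3 : ∫⁻ τ in Iio x, φ (τ - δ) = ∫⁻ τ in Iio (x - δ), φ τ := by
    rw [← lintegral_indicator measurableSet_Iio, ← lintegral_indicator measurableSet_Iio]
    have := lintegral_add_right_eq_self (μ := volume) ((Iio (x - δ)).indicator φ) (-δ)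
    rw [← this]
    congr 1
    funext τ
    have hiff : τ + -δ < x - δ ↔ τ < x := by constructor <;> intro h <;> linarith
    by_cases hτ : τ < x
    · rw [Set.indicator_of_mem (mem_Iio.2 hτ), Set.indicator_of_mem (mem_Iio.2 (hiff.2 hτ))]
      rw [sub_eq_add_neg]
    · rw [Set.indicator_of_notMem (fun hc => hτ (mem_Iio.1 hc)),
        Set.indicator_of_notMem (fun hc => hτ (hiff.1 (mem_Iio.1 hc)))]
  -- subtraction
  have hle : ∀ᵐ τ ∂(volume.restrict (Iio x)), φ (τ - δ) ≤ φ τ := by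
    refine (ae_restrict_iff' measurableSet_Iio).2 (Filter.Eventually.of_forall fun τ hτ => ?_)
    exact hmono (τ - δ) τ (by linarith) (lt_trans (EReal.coe_lt_coe_iff.2 hτ) hx)
  have hψfin : ∫⁻ τ in Iio x, φ (τ - δ) ≠ ⊤ := by rw [step3]; exact hfin _
  rw [lintegral_sub hψm hψfin hle, step3]
  -- split the integral
  have hsplit : ∫⁻ τ in Iio x, φ τ
      = (∫⁻ τ in Iio (x - δ), φ τ) + ∫⁻ τ in Ico (x - δ) x, φ τ := by
    rw [← Set.Iio_union_Ico_eq_Iio (sub_le_self x hδ.le)]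
    exact lintegral_union measurableSet_Ico
      ((Set.Iio_disjoint_Ici le_rfl).mono_right Set.Ico_subset_Ici_self)
  rw [hsplit]
  exact ENNReal.add_sub_cancel_left (hfin _)


theorem monotone_reduction (a b : EReal) (hab : a < b) (p q : ℝ) (hp : 0 < p)
    (hq : 0 < q) (u v w : ℝ → ℝ≥0∞)
    (hu : IsWeight a b u) (hv : IsWeight a b v) (hw : IsWeight a b w)
    (C : ℝ≥0∞) (hC : 0 < C) (hC' : C < ⊤) :
    (∀ f : ℝ → ℝ≥0∞, Measurable f → MonotoneOn f (io a b) →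
        lhsMon a b q u w f ≤ C * rhsNorm a b p v f) ↔
      (∀ h : ℝ → ℝ≥0∞, Measurable h →
        (∫⁻ x in io a b,
            (∫⁻ t in io a x, (∫⁻ τ in io a t, h τ) ^ (1 / p) * u t) ^ q * w x) ^ (p / q) ≤
          C ^ p * ∫⁻ x in io a b, h x * ∫⁻ t in io x b, v t) := by
  constructor
  · -- forward direction
    intro mono_ineq h hh
    replace hv := hv.1
    set f : ℝ → ℝ≥0∞ := fun s => (∫⁻ τ in io a (s : EReal), h τ) ^ (1 / p) with hf_def
    have hGmono : Monotone fun s : ℝ => ∫⁻ τ in io a (s : EReal), h τ := fun s t hst =>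
      lintegral_mono_set fun τ hτ => ⟨hτ.1, lt_of_lt_of_le hτ.2 (EReal.coe_le_coe_iff.2 hst)⟩
    have hf_meas : Measurable f := hGmono.measurable.pow measurable_const
    have hf_mono : MonotoneOn f (io a b) := fun s _ t _ hst =>
      ENNReal.rpow_le_rpow (hGmono hst) (by positivity)
    have key := mono_ineq f hf_meas hf_mono
    have hfp : ∀ s : ℝ, f s ^ p = ∫⁻ τ in io a (s : EReal), h τ := fun s =>
      rpow_rpow _ (one_div_mul_cancel hp.ne')
    have hr : rhsNorm a b p v f ^ p = ∫⁻ τ in io a b, h τ * ∫⁻ t in io (τ : EReal) b, v t := by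
      rw [rhsNorm, rpow_rpow _ (one_div_mul_cancel hp.ne'), ← swap_lemma a b hh hv]
      exact setLIntegral_congr_fun (measurableSet_io a b)
        (fun x _ => by rw [hfp])
    calc (∫⁻ x in io a b, (∫⁻ t in io a (x : EReal), f t * u t) ^ q * w x) ^ (p / q)
        = lhsMon a b q u w f ^ p := by
          rw [lhsMon, ← ENNReal.rpow_mul]
          congr 1
          ring
      _ ≤ (C * rhsNorm a b p v f) ^ p := ENNReal.rpow_le_rpow key hp.le
      _ = C ^ p * rhsNorm a b p v f ^ p := ENNReal.mul_rpow_of_nonneg _ _ hp.le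
      _ = _ := by rw [hr]
  · -- backward direction
    intro hcond f hf_meas hf_mono
    replace hu := hu.1
    replace hv := hv.1
    replace hw := hw.1
    have hIm : MeasurableSet (io a b) := measurableSet_io a b
    set g : ℝ → ℝ≥0∞ := fun x => f x ^ p with hg_def
    have hg_meas : Measurable g := hf_meas.pow measurable_const
    have hg_mono : MonotoneOn g (io a b) := fun s hs t ht hst =>
      ENNReal.rpow_le_rpow (hf_mono hs ht hst) hp.le
    -- the approximating data
    set δ : ℕ → ℝ := fun n => 1 / ((n : ℝ) + 1) with hδ_def
    set r : ℕ → ℝ := fun n => if a = ⊥ then -((n : ℝ) + 1) else a.toReal with hr_def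
    set M : ℕ → ℝ≥0∞ := fun n => ENNReal.ofReal ((n : ℝ) + 1) with hM_def
    set φ : ℕ → ℝ → ℝ≥0∞ := fun n τ =>
      if a < (τ : EReal) ∧ (τ : EReal) < b ∧ r n < τ then min (g τ) (M n) else 0 with hφ_def
    set h : ℕ → ℝ → ℝ≥0∞ := fun n τ => M n * (φ n τ - φ n (τ - δ n)) with hh_def
    have hδpos : ∀ n, 0 < δ n := fun n => by positivity
    have hMne : ∀ n, M n ≠ ⊤ := fun n => ENNReal.ofReal_ne_top
    have hφ_meas : ∀ n, Measurable (φ n) := by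
      intro n
      refine Measurable.ite ?_ (hg_meas.min measurable_const) measurable_const
      have : {τ : ℝ | a < (τ : EReal) ∧ (τ : EReal) < b ∧ r n < τ} = io a b ∩ Ioi (r n) := by
        ext τ; exact ⟨fun ht => ⟨⟨ht.1, ht.2.1⟩, ht.2.2⟩, fun ht => ⟨ht.1.1, ht.1.2, ht.2⟩⟩
      rw [this]
      exact hIm.inter measurableSet_Ioi
    have hφ_bd : ∀ n τ, φ n τ ≤ M n := by
      intro n τ
      rw [hφ_def]
      dsimp only
      split
      · exact min_le_right _ _
      · exact zero_le
    have hφ_supp : ∀ n τ, τ ≤ r n → φ n τ = 0 := by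
      intro n τ hτ
      rw [hφ_def]
      dsimp only
      rw [if_neg]
      rintro ⟨-, -, hc⟩
      exact absurd hτ (not_le.2 hc)
    have hφ_zero : ∀ n (τ : ℝ), ¬ a < (τ : EReal) → φ n τ = 0 := by
      intro n τ hτ
      rw [hφ_def]
      dsimp only
      rw [if_neg]
      rintro ⟨hc, -, -⟩
      exact hτ hc
    have hφ_mono : ∀ n (τ₁ τ₂ : ℝ), τ₁ ≤ τ₂ → (τ₂ : EReal) < b → φ n τ₁ ≤ φ n τ₂ := by
      intro n τ₁ τ₂ hle hb
      rw [hφ_def]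
      dsimp only
      by_cases h₁ : a < (τ₁ : EReal) ∧ (τ₁ : EReal) < b ∧ r n < τ₁
      · have hc : (τ₁ : EReal) ≤ (τ₂ : EReal) := EReal.coe_le_coe_iff.2 hle
        have h₂ : a < (τ₂ : EReal) ∧ (τ₂ : EReal) < b ∧ r n < τ₂ :=
          ⟨lt_of_lt_of_le h₁.1 hc, hb, lt_of_lt_of_le h₁.2.2 hle⟩
        rw [if_pos h₁, if_pos h₂]
        exact min_le_min (hg_mono ⟨h₁.1, h₁.2.1⟩ ⟨h₂.1, h₂.2.1⟩ hle) le_rfl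
      · rw [if_neg h₁]
        exact zero_le
    have hh_meas : ∀ n, Measurable (h n) := fun n =>
      ((hφ_meas n).sub ((hφ_meas n).comp (measurable_id.sub_const (δ n)))).const_mul (M n)
    -- the key identity
    have hGid : ∀ n (x : ℝ), (x : EReal) < b →
        ∫⁻ τ in io a (x : EReal), h n τ = M n * ∫⁻ τ in Ico (x - δ n) x, φ n τ := fun n x hx =>
      key_identity (hφ_meas n) (hδpos n) (hMne n) (hφ_bd n) (hφ_supp n) (hφ_zero n)
        (hφ_mono n) hx
    have hMδ : ∀ n, M n * ENNReal.ofReal (δ n) = 1 := by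
      intro n
      rw [hM_def, hδ_def]
      dsimp only
      rw [← ENNReal.ofReal_mul (by positivity), mul_one_div_cancel (by positivity),
        ENNReal.ofReal_one]
    -- upper bound
    have hGle : ∀ n, ∀ x ∈ io a b, (∫⁻ τ in io a (x : EReal), h n τ) ≤ g x := by
      intro n x hx
      rw [hGid n x hx.2]
      have hpt : ∀ τ ∈ Ico (x - δ n) x, φ n τ ≤ g x := by
        intro τ hτ
        rw [hφ_def]
        dsimp only
        split
        · next hcond' =>
          exact le_trans (min_le_left _ _)
            (hg_mono ⟨hcond'.1, hcond'.2.1⟩ hx (le_of_lt hτ.2))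
        · exact zero_le
      calc M n * ∫⁻ τ in Ico (x - δ n) x, φ n τ
          ≤ M n * ∫⁻ _ in Ico (x - δ n) x, g x := by
            exact mul_le_mul_right (setLIntegral_mono' measurableSet_Ico hpt) _
        _ = M n * (g x * ENNReal.ofReal (δ n)) := by
            rw [setLIntegral_const, Real.volume_Ico, show x - (x - δ n) = δ n by ring]
        _ = g x * (M n * ENNReal.ofReal (δ n)) := by ring
        _ = g x := by rw [hMδ, mul_one]
    -- lower bound
    have hGlb : ∀ x y : ℝ, x ∈ io a b → y ∈ io a b → y < x →
        g y ≤ liminf (fun n => ∫⁻ τ in io a (x : EReal), h n τ) atTop := by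
      intro x y hx hy hyx
      refine le_of_forall_lt fun c hc => ?_
      obtain ⟨c', hcc', hc'⟩ := exists_between hc
      have hev₁ : ∀ᶠ n in atTop, y < x - δ n := by
        have hδ0 : Tendsto (fun n : ℕ => δ n) atTop (nhds 0) :=
          tendsto_one_div_add_atTop_nhds_zero_nat
        filter_upwards [hδ0.eventually (gt_mem_nhds (show (0:ℝ) < x - y by linarith))] with n hn
        linarith
      have hev₂ : ∀ᶠ n in atTop, r n < y := by
        by_cases ha : a = ⊥
        · obtain ⟨N, hN⟩ := exists_nat_gt (-y)
          refine eventually_atTop.2 ⟨N, fun n hn => ?_⟩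
          have : (N : ℝ) ≤ n := Nat.cast_le.2 hn
          rw [hr_def]
          dsimp only
          rw [if_pos ha]
          linarith
        · refine Filter.Eventually.of_forall fun n => ?_
          rw [hr_def]
          dsimp only
          rw [if_neg ha]
          have hane : a ≠ ⊤ := fun hc => by
            rw [hc] at hy; exact absurd hy.1 (by simp)
          have : a = ((a.toReal : ℝ) : EReal) := (EReal.coe_toReal hane ha).symm
          rw [this] at hy
          exact EReal.coe_lt_coe_iff.1 hy.1
      have hev₃ : ∀ᶠ n in atTop, c' ≤ min (g y) (M n) := by
        have hc'top : c' ≠ ⊤ := by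
          intro hc''
          rw [hc''] at hc'
          exact absurd hc' (by simp)
        obtain ⟨k, hk⟩ := ENNReal.exists_nat_gt hc'top
        refine eventually_atTop.2 ⟨k, fun n hn => ?_⟩
        refine le_min hc'.le (le_trans hk.le ?_)
        rw [hM_def]
        dsimp only
        rw [show ((n : ℝ) + 1) = ((n + 1 : ℕ) : ℝ) by push_cast; ring, ENNReal.ofReal_natCast]
        exact_mod_cast Nat.le_succ_of_le hn
      have hev : ∀ᶠ n in atTop, c' ≤ ∫⁻ τ in io a (x : EReal), h n τ := by
        filter_upwards [hev₁, hev₂, hev₃] with n h₁ h₂ h₃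
        rw [hGid n x hx.2]
        have hpt : ∀ τ ∈ Ico (x - δ n) x, min (g y) (M n) ≤ φ n τ := by
          intro τ hτ
          have hyτ : y < τ := lt_of_lt_of_le h₁ hτ.1
          have hcondτ : a < (τ : EReal) ∧ (τ : EReal) < b ∧ r n < τ :=
            ⟨lt_trans hy.1 (EReal.coe_lt_coe_iff.2 hyτ),
              lt_trans (EReal.coe_lt_coe_iff.2 hτ.2) hx.2, lt_trans h₂ hyτ⟩
          rw [hφ_def]
          dsimp only
          rw [if_pos hcondτ]
          exact min_le_min (hg_mono hy ⟨hcondτ.1, hcondτ.2.1⟩ hyτ.le) le_rfl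
        calc c' ≤ min (g y) (M n) := h₃
          _ = min (g y) (M n) * (M n * ENNReal.ofReal (δ n)) := by rw [hMδ, mul_one]
          _ = M n * (min (g y) (M n) * ENNReal.ofReal (δ n)) := by ring
          _ = M n * ∫⁻ _ in Ico (x - δ n) x, min (g y) (M n) := by
              rw [setLIntegral_const, Real.volume_Ico, show x - (x - δ n) = δ n by ring]
          _ ≤ M n * ∫⁻ τ in Ico (x - δ n) x, φ n τ :=
              mul_le_mul_right (setLIntegral_mono (hφ_meas n) hpt) _
      exact lt_of_lt_of_le hcc' (le_liminf_of_le (by isBoundedDefault) hev)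
    -- jump set is countable
    set N : Set ℝ := {x | x ∈ io a b ∧ (⨆ y ∈ io a b ∩ Iio x, g y) < g x} with hN_def
    have hNc : N.Countable := by
      have hex := fun (x : ℝ) (hx : x ∈ N) => ENNReal.lt_iff_exists_rat_btwn.1 hx.2
      choose! e he0 he1 he2 using hex
      rw [Set.countable_iff_exists_injOn]
      refine ⟨fun x => Encodable.encode (e x), fun x hx y hy hxy => ?_⟩
      have hee : e x = e y := Encodable.encode_injective hxy
      by_contra hne
      rcases lt_or_gt_of_ne hne with hlt | hlt
      · have h1 := he2 x hx
        have h2 : g x ≤ ⨆ z ∈ io a b ∩ Iio y, g z := le_biSup g ⟨hx.1, hlt⟩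
        have h3 := lt_of_le_of_lt h2 (he1 y hy)
        rw [hee] at h1
        exact absurd (lt_trans h1 h3) (lt_irrefl _)
      · have h1 := he2 y hy
        have h2 : g y ≤ ⨆ z ∈ io a b ∩ Iio x, g z := le_biSup g ⟨hy.1, hlt⟩
        have h3 := lt_of_le_of_lt h2 (he1 x hx)
        rw [← hee] at h1
        exact absurd (lt_trans h1 h3) (lt_irrefl _)
    -- measurability of the approximants
    have hG_mono : ∀ n, Monotone fun x : ℝ => ∫⁻ τ in io a (x : EReal), h n τ := fun n s t hst =>
      lintegral_mono_set fun τ hτ => ⟨hτ.1, lt_of_lt_of_le hτ.2 (EReal.coe_le_coe_iff.2 hst)⟩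
    have hG_meas : ∀ n, Measurable fun x : ℝ => ∫⁻ τ in io a (x : EReal), h n τ := fun n =>
      (hG_mono n).measurable
    have hF_meas : ∀ n, Measurable fun x : ℝ => (∫⁻ τ in io a (x : EReal), h n τ) ^ (1 / p) :=
      fun n => (hG_meas n).pow measurable_const
    -- the a.e. lower bound
    have hae : ∀ᵐ x ∂(volume.restrict (io a b)),
        f x ≤ liminf (fun n => (∫⁻ τ in io a (x : EReal), h n τ) ^ (1 / p)) atTop := by
      have hmemI : ∀ᵐ x ∂(volume.restrict (io a b)), x ∈ io a b := ae_restrict_mem hIm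
      have hN0 : volume N = 0 := hNc.measure_zero _
      have hnotN : ∀ᵐ x ∂(volume.restrict (io a b)), x ∉ N :=
        ae_restrict_of_ae (measure_eq_zero_iff_ae_notMem.1 hN0)
      filter_upwards [hmemI, hnotN] with x hx hxN
      have hsup : g x ≤ ⨆ y ∈ io a b ∩ Iio x, g y := by
        by_contra hcon
        exact hxN ⟨hx, lt_of_not_ge hcon⟩
      have hglim : g x ≤ liminf (fun n => ∫⁻ τ in io a (x : EReal), h n τ) atTop :=
        le_trans hsup (iSup₂_le fun y hy => hGlb x y hx hy.1 hy.2)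
      calc f x = (g x) ^ (1 / p) := (rpow_rpow _ (mul_one_div_cancel hp.ne')).symm
        _ ≤ (liminf (fun n => ∫⁻ τ in io a (x : EReal), h n τ) atTop) ^ (1 / p) :=
            ENNReal.rpow_le_rpow hglim (by positivity)
        _ ≤ liminf (fun n => (∫⁻ τ in io a (x : EReal), h n τ) ^ (1 / p)) atTop :=
            lim_rpow _ (by positivity)
    -- bound for each n coming from the hypothesis
    have hAbound : ∀ n, (∫⁻ (x : ℝ) in io a b,
        (∫⁻ t in io a (x : EReal), (∫⁻ τ in io a (t : EReal), h n τ) ^ (1 / p) * u t) ^ q * w x)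
        ≤ (C * rhsNorm a b p v f) ^ q := by
      intro n
      have happ := hcond (h n) (hh_meas n)
      have hrhs : (∫⁻ (x : ℝ) in io a b, h n x * ∫⁻ t in io (x : EReal) b, v t)
          ≤ ∫⁻ (x : ℝ) in io a b, f x ^ p * v x := by
        rw [← swap_lemma a b (hh_meas n) hv]
        refine setLIntegral_mono ((hf_meas.pow measurable_const).mul hv) fun x hx => ?_
        exact mul_le_mul_left (hGle n x hx) _
      have h2 := le_trans happ (mul_le_mul_right hrhs _)
      calc (∫⁻ (x : ℝ) in io a b,
          (∫⁻ t in io a (x : EReal), (∫⁻ τ in io a (t : EReal), h n τ) ^ (1 / p) * u t) ^ q * w x)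
          = ((∫⁻ (x : ℝ) in io a b,
              (∫⁻ t in io a (x : EReal),
                (∫⁻ τ in io a (t : EReal), h n τ) ^ (1 / p) * u t) ^ q * w x) ^ (p / q)) ^ (q / p) :=
            (rpow_rpow _ (by field_simp)).symm
        _ ≤ (C ^ p * ∫⁻ (x : ℝ) in io a b, f x ^ p * v x) ^ (q / p) :=
            ENNReal.rpow_le_rpow h2 (by positivity)
        _ = (C * rhsNorm a b p v f) ^ q := by
            rw [rhsNorm, ENNReal.mul_rpow_of_nonneg _ _ (show (0:ℝ) ≤ q / p by positivity),
              ENNReal.mul_rpow_of_nonneg _ _ hq.le, ← ENNReal.rpow_mul, ← ENNReal.rpow_mul]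
            congr 1
            · congr 1; field_simp
            · congr 1; ring
    -- Fatou
    have hInner_mono : ∀ n, Monotone fun x : ℝ =>
        ∫⁻ t in io a (x : EReal), (∫⁻ τ in io a (t : EReal), h n τ) ^ (1 / p) * u t :=
      fun n s t hst =>
        lintegral_mono_set fun τ hτ => ⟨hτ.1, lt_of_lt_of_le hτ.2 (EReal.coe_le_coe_iff.2 hst)⟩
    have hL : (∫⁻ (x : ℝ) in io a b, (∫⁻ t in io a (x : EReal), f t * u t) ^ q * w x)
        ≤ liminf (fun n => ∫⁻ (x : ℝ) in io a b,
            (∫⁻ t in io a (x : EReal),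
              (∫⁻ τ in io a (t : EReal), h n τ) ^ (1 / p) * u t) ^ q * w x) atTop := by
      have step1 : ∀ᵐ (x : ℝ) ∂(volume.restrict (io a b)),
          (∫⁻ t in io a (x : EReal), f t * u t) ^ q * w x
            ≤ liminf (fun n =>
              (∫⁻ t in io a (x : EReal),
                (∫⁻ τ in io a (t : EReal), h n τ) ^ (1 / p) * u t) ^ q * w x) atTop := by
        filter_upwards [ae_restrict_mem hIm] with x hx
        have hsub : io a (x : EReal) ⊆ io a b := fun τ hτ => ⟨hτ.1, lt_trans hτ.2 hx.2⟩
        have haesub := ae_restrict_of_ae_restrict_of_subset hsub hae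
        have inner : ∫⁻ t in io a (x : EReal), f t * u t
            ≤ liminf (fun n => ∫⁻ t in io a (x : EReal),
                (∫⁻ τ in io a (t : EReal), h n τ) ^ (1 / p) * u t) atTop := by
          calc ∫⁻ t in io a (x : EReal), f t * u t
              ≤ ∫⁻ t in io a (x : EReal),
                  liminf (fun n => (∫⁻ τ in io a (t : EReal), h n τ) ^ (1 / p) * u t) atTop :=
                lintegral_mono_ae (haesub.mono fun t ht =>
                  le_trans (mul_le_mul_left ht (u t)) (lim_mul_const _ _))
            _ ≤ _ := lintegral_liminf_le fun n => (hF_meas n).mul hu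
        calc (∫⁻ t in io a (x : EReal), f t * u t) ^ q * w x
            ≤ (liminf (fun n => ∫⁻ t in io a (x : EReal),
                (∫⁻ τ in io a (t : EReal), h n τ) ^ (1 / p) * u t) atTop) ^ q * w x :=
              mul_le_mul_left (ENNReal.rpow_le_rpow inner hq.le) _
          _ ≤ (liminf (fun n => (∫⁻ t in io a (x : EReal),
                (∫⁻ τ in io a (t : EReal), h n τ) ^ (1 / p) * u t) ^ q) atTop) * w x :=
              mul_le_mul_left (lim_rpow _ hq) _
          _ ≤ liminf (fun n => (∫⁻ t in io a (x : EReal),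
                (∫⁻ τ in io a (t : EReal), h n τ) ^ (1 / p) * u t) ^ q * w x) atTop :=
              lim_mul_const _ _
      calc ∫⁻ (x : ℝ) in io a b, (∫⁻ t in io a (x : EReal), f t * u t) ^ q * w x
          ≤ ∫⁻ (x : ℝ) in io a b, liminf (fun n =>
              (∫⁻ t in io a (x : EReal),
                (∫⁻ τ in io a (t : EReal), h n τ) ^ (1 / p) * u t) ^ q * w x) atTop :=
            lintegral_mono_ae step1
        _ ≤ _ := lintegral_liminf_le fun n =>
            (((hInner_mono n).measurable.pow measurable_const).mul hw)
    have hlim : liminf (fun n => ∫⁻ (x : ℝ) in io a b,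
        (∫⁻ t in io a (x : EReal),
          (∫⁻ τ in io a (t : EReal), h n τ) ^ (1 / p) * u t) ^ q * w x) atTop
        ≤ (C * rhsNorm a b p v f) ^ q :=
      liminf_le_of_frequently_le (Filter.Frequently.of_forall fun n => hAbound n)
        (by isBoundedDefault)
    rw [lhsMon]
    calc (∫⁻ (x : ℝ) in io a b, (∫⁻ t in io a (x : EReal), f t * u t) ^ q * w x) ^ (1 / q)
        ≤ ((C * rhsNorm a b p v f) ^ q) ^ (1 / q) :=
          ENNReal.rpow_le_rpow (le_trans hL hlim) (by positivity)
      _ = C * rhsNorm a b p v f := rpow_rpow _ (mul_one_div_cancel hq.ne')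
end
end
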